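/- arXiv:1905.03234 — 6 statements merged into one kernel-verified Lean document; each statement's English description precedes it below -/
import Mathlib

section
/- Let ϑ be a real number with 0 < ϑ ≤ π/6, let N ≥ 3 be an integer, and let θ_1, …, θ_N be real numbers (indexed cyclically mod N) satisfying: θ_1 + ⋯ + θ_N = 2π; ϑ ≤ θ_i ≤ π − 2ϑ for every i; and |θ_i + θ_{i+1} − π| < ϑ for every i (indices mod N). Then N = 4. -/
/-- Arithmetic content of Lemma 2.1: an interior quasi singular vertex has exactly 4
triangles sharing it. -/
theorem interior_quasi_singular_vertex_has_four_triangles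
    (ϑ : ℝ) (hϑ0 : 0 < ϑ) (hϑ6 : ϑ ≤ Real.pi / 6)
    (N : ℕ) (hN : 3 ≤ N) (θ : ℕ → ℝ)
    (hsum : ∑ i ∈ Finset.range N, θ i = 2 * Real.pi)
    (hlow : ∀ i < N, ϑ ≤ θ i)
    (hhigh : ∀ i < N, θ i ≤ Real.pi - 2 * ϑ)
    (hadj : ∀ i < N, |θ i + θ ((i + 1) % N) - Real.pi| < ϑ) :
    N = 4 := by
  have hNpos : 0 < N := by omega
  -- cyclic shift sum
  have hshift : ∑ i ∈ Finset.range N, θ ((i + 1) % N) = ∑ i ∈ Finset.range N, θ i := by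
    apply Finset.sum_nbij' (fun i => (i + 1) % N) (fun j => (j + N - 1) % N)
    · intro a ha; exact Finset.mem_range.2 (Nat.mod_lt _ hNpos)
    · intro a ha; exact Finset.mem_range.2 (Nat.mod_lt _ hNpos)
    · intro a ha
      simp only [Finset.mem_range] at ha
      rcases Nat.lt_or_ge (a + 1) N with h | h
      · rw [Nat.mod_eq_of_lt h, show a + 1 + N - 1 = a + N by omega,
          Nat.add_mod_right, Nat.mod_eq_of_lt (by omega)]
      · have hEq : a + 1 = N := by omega
        rw [hEq, Nat.mod_self, show 0 + N - 1 = N - 1 by omega,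
          Nat.mod_eq_of_lt (by omega)]
        omega
    · intro a ha
      simp only [Finset.mem_range] at ha
      rcases Nat.eq_zero_or_pos a with h | h
      · subst h
        rw [show 0 + N - 1 = N - 1 by omega,
          Nat.mod_eq_of_lt (show N - 1 < N by omega),
          show N - 1 + 1 = N by omega, Nat.mod_self]
      · rw [show a + N - 1 = (a - 1) + N by omega, Nat.add_mod_right,
          Nat.mod_eq_of_lt (show a - 1 < N by omega), show a - 1 + 1 = a by omega,
          Nat.mod_eq_of_lt ha]
    · intro a ha; rfl
  have hsum2 : ∑ i ∈ Finset.range N, (θ i + θ ((i + 1) % N) - Real.pi)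
      = 4 * Real.pi - N * Real.pi := by
    rw [Finset.sum_sub_distrib, Finset.sum_add_distrib, hshift, hsum]
    simp [Finset.sum_const]
    ring
  have habs : |4 * Real.pi - (N : ℝ) * Real.pi| < N * ϑ := by
    rw [← hsum2]
    calc |∑ i ∈ Finset.range N, (θ i + θ ((i + 1) % N) - Real.pi)|
        ≤ ∑ i ∈ Finset.range N, |θ i + θ ((i + 1) % N) - Real.pi| :=
          Finset.abs_sum_le_sum_abs _ _
      _ < ∑ i ∈ Finset.range N, ϑ := by
          apply Finset.sum_lt_sum_of_nonempty
          · exact Finset.nonempty_range_iff.2 (by omega)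
          · intro i hi; exact hadj i (Finset.mem_range.1 hi)
      _ = N * ϑ := by simp [Finset.sum_const, mul_comm]
  have hπ := Real.pi_pos
  rcases abs_lt.1 habs with ⟨h1, h2⟩
  by_contra hne
  rcases (by omega : N = 3 ∨ 5 ≤ N) with h3 | h5
  · subst h3
    push_cast at h1 h2
    nlinarith
  · have hN5 : (5 : ℝ) ≤ (N : ℝ) := by exact_mod_cast h5
    nlinarith [mul_le_mul_of_nonneg_left hϑ6 (by positivity : (0:ℝ) ≤ (N:ℝ))]
end

section
/- Let A, B, V ∈ ℝ² be affinely independent points, let K = convexHull{A, B, V}, and let β : ℝ² → ℝ be the unique affine function with β(V) = 1 and β(A) = β(B) = 0. Define the sting function s(x) = e(β(x)) where e(t) = (56t³ − 63t² + 18t − 1)/10. Then for every polynomial q : ℝ² → ℝ of total degree at most 3, ∫_K s(x) q(x) dx = (|K|/100) · q(V), where |K| denotes the two-dimensional Lebesgue measure (area) of K and the integral is with respect to Lebesgue measure on ℝ². -/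
open MeasureTheory

namespace StingAux

def T : Set (ℝ × ℝ) := {p | 0 ≤ p.1 ∧ 0 ≤ p.2 ∧ p.1 + p.2 ≤ 1}

lemma mem_T {p : ℝ × ℝ} : p ∈ T ↔ 0 ≤ p.1 ∧ 0 ≤ p.2 ∧ p.1 + p.2 ≤ 1 := Iff.rfl

lemma isClosed_T : IsClosed T := by
  have h1 : IsClosed {p : ℝ × ℝ | 0 ≤ p.1} := isClosed_le continuous_const continuous_fst
  have h2 : IsClosed {p : ℝ × ℝ | 0 ≤ p.2} := isClosed_le continuous_const continuous_snd
  have h3 : IsClosed {p : ℝ × ℝ | p.1 + p.2 ≤ 1} :=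
    isClosed_le (continuous_fst.add continuous_snd) continuous_const
  have : T = {p : ℝ × ℝ | 0 ≤ p.1} ∩ ({p : ℝ × ℝ | 0 ≤ p.2} ∩ {p : ℝ × ℝ | p.1 + p.2 ≤ 1}) := by
    ext p; simp [mem_T, and_assoc]
  rw [this]
  exact h1.inter (h2.inter h3)

lemma isCompact_T : IsCompact T := by
  refine IsCompact.of_isClosed_subset (isCompact_Icc (a := ((0:ℝ),(0:ℝ))) (b := (1,1))) isClosed_T ?_
  rintro ⟨u, v⟩ h
  rw [mem_T] at h
  simp only [Set.mem_Icc, Prod.le_def]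
  refine ⟨⟨h.1, h.2.1⟩, show u ≤ 1 from ?_, show v ≤ 1 from ?_⟩ <;>
    linarith [h.1, h.2.1, h.2.2]

lemma measurableSet_T : MeasurableSet T := isClosed_T.measurableSet

lemma hasDerivAt_poly (a0 a1 a2 a3 a4 a5 a6 a7 a8 x : ℝ) :
    HasDerivAt (fun t : ℝ => a0 + a1*t + a2*t^2 + a3*t^3 + a4*t^4 + a5*t^5 + a6*t^6 + a7*t^7 + a8*t^8)
      (a1 + 2*a2*x + 3*a3*x^2 + 4*a4*x^3 + 5*a5*x^4 + 6*a6*x^5 + 7*a7*x^6 + 8*a8*x^7) x := by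
  have H := ((((((((hasDerivAt_const x a0).add ((hasDerivAt_pow 1 x).const_mul a1)).add
      ((hasDerivAt_pow 2 x).const_mul a2)).add ((hasDerivAt_pow 3 x).const_mul a3)).add
      ((hasDerivAt_pow 4 x).const_mul a4)).add ((hasDerivAt_pow 5 x).const_mul a5)).add
      ((hasDerivAt_pow 6 x).const_mul a6)).add ((hasDerivAt_pow 7 x).const_mul a7)).add
      ((hasDerivAt_pow 8 x).const_mul a8)
  convert H using 1
  all_goals first | rfl | (funext t; simp only [Pi.add_apply]; ring) | (push_cast; ring)

lemma integral_T (f : ℝ × ℝ → ℝ) (hf : Continuous f) :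
    ∫ p in T, f p = ∫ u in (0:ℝ)..1, ∫ v in (0:ℝ)..(1-u), f (u, v) := by
  have hT := measurableSet_T
  have hint : Integrable (T.indicator f) volume :=
    (integrable_indicator_iff hT).2 (hf.continuousOn.integrableOn_compact isCompact_T)
  rw [← integral_indicator hT]
  have hprod : (volume : Measure (ℝ × ℝ)) = (volume : Measure ℝ).prod volume := rfl
  rw [hprod] at hint ⊢
  rw [MeasureTheory.integral_prod _ hint]
  have hslice : ∀ u : ℝ, (∫ v, T.indicator f (u, v))
      = (Set.Icc (0:ℝ) 1).indicator (fun u => ∫ v in (0:ℝ)..(1-u), f (u, v)) u := by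
    intro u
    by_cases hu : u ∈ Set.Icc (0:ℝ) 1
    · rw [Set.indicator_of_mem hu]
      have hfun : (fun v => T.indicator f (u, v))
          = (Set.Icc (0:ℝ) (1-u)).indicator (fun v => f (u, v)) := by
        funext v
        by_cases hv : v ∈ Set.Icc (0:ℝ) (1-u)
        · rw [Set.indicator_of_mem hv, Set.indicator_of_mem]
          rw [mem_T]
          refine ⟨hu.1, hv.1, ?_⟩
          have := hv.2; simp only; linarith
        · rw [Set.indicator_of_notMem hv, Set.indicator_of_notMem]
          intro hmem
          rw [mem_T] at hmem
          exact hv ⟨hmem.2.1, by have := hmem.2.2; simp only [Set.mem_Icc] at *; linarith⟩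
      rw [hfun, integral_indicator measurableSet_Icc, integral_Icc_eq_integral_Ioc,
        ← intervalIntegral.integral_of_le (by simp only [Set.mem_Icc] at hu; linarith : (0:ℝ) ≤ 1 - u)]
    · rw [Set.indicator_of_notMem hu]
      have hfun : (fun v => T.indicator f (u, v)) = fun _ => (0:ℝ) := by
        funext v
        apply Set.indicator_of_notMem
        intro hmem
        rw [mem_T] at hmem
        obtain ⟨h1, h2, h3⟩ := hmem
        simp only [Set.mem_Icc] at hu
        push_neg at hu
        rcases lt_or_ge u 0 with h | h
        · simp only at h1; linarith
        · have := hu h; simp only at h2 h3; linarith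
      rw [hfun, integral_zero]
  simp only [hslice]
  rw [integral_indicator measurableSet_Icc, integral_Icc_eq_integral_Ioc,
    ← intervalIntegral.integral_of_le (by norm_num : (0:ℝ) ≤ 1)]

lemma lemmaM (c00 c10 c01 c20 c11 c02 c30 c21 c12 c03 : ℝ) :
    ∫ p in T, (56*p.2^3 - 63*p.2^2 + 18*p.2 - 1)/10 *
      (c00 + c10*p.1 + c01*p.2 + c20*p.1^2 + c11*(p.1*p.2) + c02*p.2^2
        + c30*p.1^3 + c21*(p.1^2*p.2) + c12*(p.1*p.2^2) + c03*p.2^3)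
      = (c00 + c01 + c02 + c03)/200 := by
  rw [integral_T _ (by fun_prop)]
  show (∫ u in (0:ℝ)..1, ∫ v in (0:ℝ)..(1-u),
      (56*v^3 - 63*v^2 + 18*v - 1)/10 * (c00 + c10*u + c01*v + c20*u^2 + c11*(u*v) + c02*v^2 + c30*u^3 + c21*(u^2*v) + c12*(u*v^2) + c03*v^3)) = _
  have inner : ∀ u : ℝ, (∫ v in (0:ℝ)..(1-u),
      (56*v^3 - 63*v^2 + 18*v - 1)/10 * (c00 + c10*u + c01*v + c20*u^2 + c11*(u*v) + c02*v^2 + c30*u^3 + c21*(u^2*v) + c12*(u*v^2) + c03*v^3))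
      = (((-1/10)*c00) + ((-1/10)*c10)*u + ((-1/10)*c20)*u^2 + ((-1/10)*c30)*u^3)*(1-u)^1 + (((9/10)*c00 + (-1/20)*c01) + ((9/10)*c10 + (-1/20)*c11)*u + ((9/10)*c20 + (-1/20)*c21)*u^2 + ((9/10)*c30)*u^3)*(1-u)^2 + (((-21/10)*c00 + (3/5)*c01 + (-1/30)*c02) + ((-21/10)*c10 + (3/5)*c11 + (-1/30)*c12)*u + ((-21/10)*c20 + (3/5)*c21)*u^2 + ((-21/10)*c30)*u^3)*(1-u)^3 + (((7/5)*c00 + (-63/40)*c01 + (9/20)*c02 + (-1/40)*c03) + ((7/5)*c10 + (-63/40)*c11 + (9/20)*c12)*u + ((7/5)*c20 + (-63/40)*c21)*u^2 + ((7/5)*c30)*u^3)*(1-u)^4 + (((28/25)*c01 + (-63/50)*c02 + (9/25)*c03) + ((28/25)*c11 + (-63/50)*c12)*u + ((28/25)*c21)*u^2)*(1-u)^5 + (((14/15)*c02 + (-21/20)*c03) + ((14/15)*c12)*u)*(1-u)^6 + (((4/5)*c03))*(1-u)^7 := by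
    intro u
    rw [intervalIntegral.integral_eq_sub_of_hasDerivAt
      (f := fun v : ℝ => (0:ℝ) + (((-1/10)*c00) + ((-1/10)*c10)*u + ((-1/10)*c20)*u^2 + ((-1/10)*c30)*u^3)*v + (((9/10)*c00 + (-1/20)*c01) + ((9/10)*c10 + (-1/20)*c11)*u + ((9/10)*c20 + (-1/20)*c21)*u^2 + ((9/10)*c30)*u^3)*v^2 + (((-21/10)*c00 + (3/5)*c01 + (-1/30)*c02) + ((-21/10)*c10 + (3/5)*c11 + (-1/30)*c12)*u + ((-21/10)*c20 + (3/5)*c21)*u^2 + ((-21/10)*c30)*u^3)*v^3 + (((7/5)*c00 + (-63/40)*c01 + (9/20)*c02 + (-1/40)*c03) + ((7/5)*c10 + (-63/40)*c11 + (9/20)*c12)*u + ((7/5)*c20 + (-63/40)*c21)*u^2 + ((7/5)*c30)*u^3)*v^4 + (((28/25)*c01 + (-63/50)*c02 + (9/25)*c03) + ((28/25)*c11 + (-63/50)*c12)*u + ((28/25)*c21)*u^2)*v^5 + (((14/15)*c02 + (-21/20)*c03) + ((14/15)*c12)*u)*v^6 + (((4/5)*c03))*v^7)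
      (f' := fun v : ℝ => (56*v^3 - 63*v^2 + 18*v - 1)/10 * (c00 + c10*u + c01*v + c20*u^2 + c11*(u*v) + c02*v^2 + c30*u^3 + c21*(u^2*v) + c12*(u*v^2) + c03*v^3))
      (fun x _ => by
        convert hasDerivAt_poly 0 (((-1/10)*c00) + ((-1/10)*c10)*u + ((-1/10)*c20)*u^2 + ((-1/10)*c30)*u^3) (((9/10)*c00 + (-1/20)*c01) + ((9/10)*c10 + (-1/20)*c11)*u + ((9/10)*c20 + (-1/20)*c21)*u^2 + ((9/10)*c30)*u^3) (((-21/10)*c00 + (3/5)*c01 + (-1/30)*c02) + ((-21/10)*c10 + (3/5)*c11 + (-1/30)*c12)*u + ((-21/10)*c20 + (3/5)*c21)*u^2 + ((-21/10)*c30)*u^3) (((7/5)*c00 + (-63/40)*c01 + (9/20)*c02 + (-1/40)*c03) + ((7/5)*c10 + (-63/40)*c11 + (9/20)*c12)*u + ((7/5)*c20 + (-63/40)*c21)*u^2 + ((7/5)*c30)*u^3) (((28/25)*c01 + (-63/50)*c02 + (9/25)*c03) + ((28/25)*c11 + (-63/50)*c12)*u + ((28/25)*c21)*u^2) (((14/15)*c02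 + (-21/20)*c03) + ((14/15)*c12)*u) (((4/5)*c03)) 0 x using 1
        all_goals first
          | rfl
          | (funext t; ring)
          | (beta_reduce; ring))
      ((by fun_prop : Continuous fun v : ℝ =>
          (56*v^3 - 63*v^2 + 18*v - 1)/10 * (c00 + c10*u + c01*v + c20*u^2 + c11*(u*v) + c02*v^2 + c30*u^3 + c21*(u^2*v) + c12*(u*v^2) + c03*v^3)).intervalIntegrable 0 (1-u))]
    ring
  simp only [inner]
  rw [intervalIntegral.integral_eq_sub_of_hasDerivAt
      (f := fun u : ℝ => (0:ℝ) + ((1/10)*c00 + (19/200)*c01 + (9/100)*c02 + (17/200)*c03)*u + ((-1/2)*c00 + (1/20)*c10 + (-1/2)*c01 + (19/400)*c11 + (-1/2)*c02 + (9/200)*c12 + (-1/2)*c03)*u^2 + (1*c00 + (-1/3)*c10 + (7/6)*c01 + (1/30)*c20 + (-1/3)*c11 + (4/3)*c02 + (19/600)*c21 + (-1/3)*c12 + (3/2)*c03)*u^3 + ((-7/8)*c00 + (3/4)*c10 + (-11/8)*c01 + (-1/4)*c20 + (7/8)*c11 + (-47/24)*c02 + (1/40)*c30 + (-1/4)*c21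 + 1*c12 + (-21/8)*c03)*u^4 + ((7/25)*c00 + (-7/10)*c10 + (161/200)*c01 + (3/5)*c20 + (-11/10)*c11 + (163/100)*c02 + (-1/5)*c30 + (7/10)*c21 + (-47/30)*c12 + (561/200)*c03)*u^5 + ((7/30)*c10 + (-14/75)*c01 + (-7/12)*c20 + (161/240)*c11 + (-217/300)*c02 + (1/2)*c30 + (-11/12)*c21 + (163/120)*c12 + (-181/100)*c03)*u^6 + ((1/5)*c20 + (-4/25)*c11 + (2/15)*c02 + (-1/2)*c30 + (23/40)*c21 + (-31/50)*c12 + (13/20)*c03)*u^7 + ((7/40)*c30 + (-7/50)*c21 + (7/60)*c12 + (-1/10)*c03)*u^8)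
      (f' := fun u : ℝ => (((-1/10)*c00) + ((-1/10)*c10)*u + ((-1/10)*c20)*u^2 + ((-1/10)*c30)*u^3)*(1-u)^1 + (((9/10)*c00 + (-1/20)*c01) + ((9/10)*c10 + (-1/20)*c11)*u + ((9/10)*c20 + (-1/20)*c21)*u^2 + ((9/10)*c30)*u^3)*(1-u)^2 + (((-21/10)*c00 + (3/5)*c01 + (-1/30)*c02) + ((-21/10)*c10 + (3/5)*c11 + (-1/30)*c12)*u + ((-21/10)*c20 + (3/5)*c21)*u^2 + ((-21/10)*c30)*u^3)*(1-u)^3 + (((7/5)*c00 + (-63/40)*c01 + (9/20)*c02 + (-1/40)*c03) + ((7/5)*c10 + (-63/40)*c11 + (9/20)*c12)*u + ((7/5)*c20 + (-63/40)*c21)*u^2 + ((7/5)*c30)*u^3)*(1-u)^4 + (((28/25)*c01 + (-63/50)*c02 + (9/25)*c03) + ((28/25)*c11 + (-63/50)*c12)*u + ((28/25)*c21)*u^2)*(1-u)^5 + (((14/15)*c02 + (-21/20)*c03) + ((14/15)*c12)*u)*(1-u)^6 + (((4/5)*c03))*(1-u)^7)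
      (fun x _ => by
        convert hasDerivAt_poly 0 ((1/10)*c00 + (19/200)*c01 + (9/100)*c02 + (17/200)*c03) ((-1/2)*c00 + (1/20)*c10 + (-1/2)*c01 + (19/400)*c11 + (-1/2)*c02 + (9/200)*c12 + (-1/2)*c03) (1*c00 + (-1/3)*c10 + (7/6)*c01 + (1/30)*c20 + (-1/3)*c11 + (4/3)*c02 + (19/600)*c21 + (-1/3)*c12 + (3/2)*c03) ((-7/8)*c00 + (3/4)*c10 + (-11/8)*c01 + (-1/4)*c20 + (7/8)*c11 + (-47/24)*c02 + (1/40)*c30 + (-1/4)*c21 + 1*c12 + (-21/8)*c03) ((7/25)*c00 + (-7/10)*c10 + (161/200)*c01 + (3/5)*c20 + (-11/10)*c11 + (163/100)*c02 + (-1/5)*c30 + (7/10)*c21 + (-47/30)*c12 + (561/200)*c03) ((7/30)*c10 + (-14/75)*c01 + (-7/12)*c20 + (161/240)*c11 + (-217/300)*c02 + (1/2)*c30 + (-11/12)*c21 + (163/120)*c12 + (-181/100)*c03) ((1/5)*c20 + (-4/25)*c11 + (2/15)*c02 + (-1/2)*c30 + (23/40)*c21 + (-31/50)*c12 + (13/20)*c03)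 ((7/40)*c30 + (-7/50)*c21 + (7/60)*c12 + (-1/10)*c03) x using 1
        all_goals first
          | rfl
          | (funext t; ring)
          | (beta_reduce; ring))
      ((by fun_prop : Continuous fun u : ℝ => (((-1/10)*c00) + ((-1/10)*c10)*u + ((-1/10)*c20)*u^2 + ((-1/10)*c30)*u^3)*(1-u)^1 + (((9/10)*c00 + (-1/20)*c01) + ((9/10)*c10 + (-1/20)*c11)*u + ((9/10)*c20 + (-1/20)*c21)*u^2 + ((9/10)*c30)*u^3)*(1-u)^2 + (((-21/10)*c00 + (3/5)*c01 + (-1/30)*c02) + ((-21/10)*c10 + (3/5)*c11 + (-1/30)*c12)*u + ((-21/10)*c20 + (3/5)*c21)*u^2 + ((-21/10)*c30)*u^3)*(1-u)^3 + (((7/5)*c00 + (-63/40)*c01 + (9/20)*c02 + (-1/40)*c03) + ((7/5)*c10 + (-63/40)*c11 + (9/20)*c12)*u + ((7/5)*c20 + (-63/40)*c21)*u^2 + ((7/5)*c30)*u^3)*(1-u)^4 + (((28/25)*c01 + (-63/50)*c02 + (9/25)*c03) + ((28/25)*c11 + (-63/50)*c12)*u + ((28/25)*c21)*u^2)*(1-u)^5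 + (((14/15)*c02 + (-21/20)*c03) + ((14/15)*c12)*u)*(1-u)^6 + (((4/5)*c03))*(1-u)^7).intervalIntegrable 0 1)]
  ring
lemma caseAux (g : ℝ × ℝ → ℝ) (c00 c10 c01 c20 c11 c02 c30 c21 c12 c03 : ℝ)
    (hg : ∀ p : ℝ × ℝ, g p = c00 + c10*p.1 + c01*p.2 + c20*p.1^2 + c11*(p.1*p.2) + c02*p.2^2
        + c30*p.1^3 + c21*(p.1^2*p.2) + c12*(p.1*p.2^2) + c03*p.2^3)
    (r : ℝ) (hr : (c00 + c01 + c02 + c03)/200 = r) :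
    ∫ p in T, (56*p.2^3 - 63*p.2^2 + 18*p.2 - 1)/10 * g p = r := by
  simp only [hg]
  rw [← hr]
  exact lemmaM _ _ _ _ _ _ _ _ _ _

lemma lemmaMono (a1 b1 c1 a2 b2 c2 : ℝ) (i j : ℕ) (hij : i + j ≤ 3) :
    ∫ p in T, (56*p.2^3 - 63*p.2^2 + 18*p.2 - 1)/10 *
        ((a1 + b1*p.1 + c1*p.2)^i * (a2 + b2*p.1 + c2*p.2)^j)
      = (a1 + c1)^i * (a2 + c2)^j / 200 := by
  have hi : i ≤ 3 := le_trans (Nat.le_add_right _ _) hij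
  have hj : j ≤ 3 := le_trans (Nat.le_add_left _ _) hij
  interval_cases i <;> interval_cases j
  · exact caseAux _ (1) 0 0 0 0 0 0 0 0 0 (fun p => by ring) _ (by ring)
  · exact caseAux _ (a2) (b2) (c2) 0 0 0 0 0 0 0 (fun p => by ring) _ (by ring)
  · exact caseAux _ (a2^2) (2*a2*b2) (2*a2*c2) (b2^2) (2*b2*c2) (c2^2) 0 0 0 0 (fun p => by ring) _ (by ring)
  · exact caseAux _ (a2^3) (3*a2^2*b2) (3*a2^2*c2) (3*a2*b2^2) (6*a2*b2*c2) (3*a2*c2^2) (b2^3) (3*b2^2*c2) (3*b2*c2^2) (c2^3) (fun p => by ring) _ (by ring)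
  · exact caseAux _ (a1) (b1) (c1) 0 0 0 0 0 0 0 (fun p => by ring) _ (by ring)
  · exact caseAux _ (a1*a2) (b1*a2 + a1*b2) (c1*a2 + a1*c2) (b1*b2) (c1*b2 + b1*c2) (c1*c2) 0 0 0 0 (fun p => by ring) _ (by ring)
  · exact caseAux _ (a1*a2^2) (b1*a2^2 + 2*a1*a2*b2) (c1*a2^2 + 2*a1*a2*c2) (2*b1*a2*b2 + a1*b2^2) (2*c1*a2*b2 + 2*b1*a2*c2 + 2*a1*b2*c2) (2*c1*a2*c2 + a1*c2^2) (b1*b2^2) (c1*b2^2 + 2*b1*b2*c2) (2*c1*b2*c2 + b1*c2^2) (c1*c2^2) (fun p => by ring) _ (by ring)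
  · omega
  · exact caseAux _ (a1^2) (2*a1*b1) (2*a1*c1) (b1^2) (2*b1*c1) (c1^2) 0 0 0 0 (fun p => by ring) _ (by ring)
  · exact caseAux _ (a1^2*a2) (2*a1*b1*a2 + a1^2*b2) (2*a1*c1*a2 + a1^2*c2) (b1^2*a2 + 2*a1*b1*b2) (2*b1*c1*a2 + 2*a1*c1*b2 + 2*a1*b1*c2) (c1^2*a2 + 2*a1*c1*c2) (b1^2*b2) (2*b1*c1*b2 + b1^2*c2) (c1^2*b2 + 2*b1*c1*c2) (c1^2*c2) (fun p => by ring) _ (by ring)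
  · omega
  · omega
  · exact caseAux _ (a1^3) (3*a1^2*b1) (3*a1^2*c1) (3*a1*b1^2) (6*a1*b1*c1) (3*a1*c1^2) (b1^3) (3*b1^2*c1) (3*b1*c1^2) (c1^3) (fun p => by ring) _ (by ring)
  · omega
  · omega
  · omega
lemma convex_T : Convex ℝ T := by
  intro x hx y hy a b ha hb hab
  rw [mem_T] at hx hy ⊢
  simp only [Prod.fst_add, Prod.snd_add, Prod.smul_fst, Prod.smul_snd, smul_eq_mul]
  refine ⟨add_nonneg (mul_nonneg ha hx.1) (mul_nonneg hb hy.1),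
          add_nonneg (mul_nonneg ha hx.2.1) (mul_nonneg hb hy.2.1), ?_⟩
  nlinarith [mul_le_mul_of_nonneg_left hx.2.2 ha, mul_le_mul_of_nonneg_left hy.2.2 hb]

lemma T_eq : convexHull ℝ {((0:ℝ),(0:ℝ)), ((1:ℝ),(0:ℝ)), ((0:ℝ),(1:ℝ))} = T := by
  apply Set.Subset.antisymm
  · apply convexHull_min _ convex_T
    rintro p hp
    simp only [Set.mem_insert_iff, Set.mem_singleton_iff] at hp
    rcases hp with rfl | rfl | rfl <;> rw [mem_T] <;> norm_num
  · rintro ⟨u, v⟩ h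
    rw [mem_T] at h
    obtain ⟨h1, h2, h3⟩ := h
    simp only at h1 h2 h3
    have hmem := Convex.sum_mem (t := (Finset.univ : Finset (Fin 3)))
      (w := ![1-u-v, u, v]) (z := ![((0:ℝ),(0:ℝ)), ((1:ℝ),(0:ℝ)), ((0:ℝ),(1:ℝ))])
      (convex_convexHull ℝ {((0:ℝ),(0:ℝ)), ((1:ℝ),(0:ℝ)), ((0:ℝ),(1:ℝ))})
      (by intro i _; fin_cases i <;> simp <;> linarith)
      (by rw [Fin.sum_univ_three]; simp; ring)
      (by intro i _; fin_cases i <;> apply subset_convexHull <;> simp)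
    have hsum : (∑ i : Fin 3, (![1-u-v, u, v] : Fin 3 → ℝ) i • (![((0:ℝ),(0:ℝ)), ((1:ℝ),(0:ℝ)), ((0:ℝ),(1:ℝ))] : Fin 3 → ℝ×ℝ) i) = (u, v) := by
      rw [Fin.sum_univ_three]
      simp [Prod.ext_iff]
    rwa [hsum] at hmem

noncomputable def Lmap (b1 c1 b2 c2 : ℝ) : (ℝ×ℝ) →ₗ[ℝ] (ℝ×ℝ) :=
  LinearMap.prod (b1 • LinearMap.fst ℝ ℝ ℝ + c1 • LinearMap.snd ℝ ℝ ℝ)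
    (b2 • LinearMap.fst ℝ ℝ ℝ + c2 • LinearMap.snd ℝ ℝ ℝ)

lemma Lmap_det (b1 c1 b2 c2 : ℝ) :
    ContinuousLinearMap.det (LinearMap.toContinuousLinearMap (Lmap b1 c1 b2 c2)) = b1*c2 - c1*b2 := by
  have h1 : ContinuousLinearMap.det (LinearMap.toContinuousLinearMap (Lmap b1 c1 b2 c2))
      = LinearMap.det (Lmap b1 c1 b2 c2) := by
    rw [ContinuousLinearMap.det]; congr 1
  rw [h1, ← LinearMap.det_toMatrix (Module.Basis.finTwoProd ℝ), Matrix.det_fin_two]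
  simp [LinearMap.toMatrix_apply, Lmap, Module.Basis.finTwoProd]

lemma cov (a1 a2 b1 b2 c1 c2 : ℝ) (hD : b1*c2 - c1*b2 ≠ 0) (g : ℝ × ℝ → ℝ) :
    ∫ x in convexHull ℝ {((a1,a2) : ℝ×ℝ), (a1+b1, a2+b2), (a1+c1, a2+c2)}, g x
      = |b1*c2 - c1*b2| * ∫ p in T, g (a1 + (b1*p.1 + c1*p.2), a2 + (b2*p.1 + c2*p.2)) := by
  set φ : ℝ×ℝ → ℝ×ℝ := fun p => (a1 + (b1*p.1 + c1*p.2), a2 + (b2*p.1 + c2*p.2)) with hφ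
  set Lc := LinearMap.toContinuousLinearMap (Lmap b1 c1 b2 c2) with hLc
  have hLapp : ∀ p : ℝ×ℝ, Lc p = (b1*p.1 + c1*p.2, b2*p.1 + c2*p.2) := by
    intro p; simp [hLc, Lmap]
  have hderiv : ∀ x ∈ T, HasFDerivWithinAt φ Lc T x := by
    intro x _
    have h2 : φ = fun p => (a1, a2) + Lc p := by
      funext p; rw [hLapp]; exact Prod.ext (by simp [hφ]) (by simp [hφ])
    rw [h2]
    exact ((Lc.hasFDerivAt).const_add (a1, a2)).hasFDerivWithinAt
  have hinj : Set.InjOn φ T := by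
    intro p _ q _ hpq
    have h1 : a1 + (b1*p.1 + c1*p.2) = a1 + (b1*q.1 + c1*q.2) := congrArg Prod.fst hpq
    have h2 : a2 + (b2*p.1 + c2*p.2) = a2 + (b2*q.1 + c2*q.2) := congrArg Prod.snd hpq
    have hx : (b1*c2 - c1*b2) * (p.1 - q.1) = 0 := by linear_combination c2*h1 - c1*h2
    have hy : (b1*c2 - c1*b2) * (p.2 - q.2) = 0 := by linear_combination b1*h2 - b2*h1
    have e1 : p.1 = q.1 := by
      have := (mul_eq_zero.mp hx).resolve_left hD; linarith
    have e2 : p.2 = q.2 := by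
      have := (mul_eq_zero.mp hy).resolve_left hD; linarith
    exact Prod.ext e1 e2
  have himg : φ '' T = convexHull ℝ {((a1,a2) : ℝ×ℝ), (a1+b1, a2+b2), (a1+c1, a2+c2)} := by
    rw [← T_eq]
    let Φ : (ℝ×ℝ) →ᵃ[ℝ] (ℝ×ℝ) :=
      ⟨φ, Lmap b1 c1 b2 c2, by
        intro p v
        refine Prod.ext ?_ ?_ <;> simp [hφ, Lmap] <;> ring⟩
    have hcoe : ⇑Φ = φ := rfl
    rw [← hcoe, AffineMap.image_convexHull]
    have e0 : φ ((0:ℝ), (0:ℝ)) = (a1, a2) := Prod.ext (by norm_num [hφ]) (by norm_num [hφ])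
    have e1 : φ ((1:ℝ), (0:ℝ)) = (a1+b1, a2+b2) := Prod.ext (by norm_num [hφ]) (by norm_num [hφ])
    have e2 : φ ((0:ℝ), (1:ℝ)) = (a1+c1, a2+c2) := Prod.ext (by norm_num [hφ]) (by norm_num [hφ])
    rw [hcoe, Set.image_insert_eq, Set.image_insert_eq, Set.image_singleton, e0, e1, e2]
  rw [← himg, integral_image_eq_integral_abs_det_fderiv_smul volume measurableSet_T hderiv hinj g]
  simp only [Lmap_det, hLc]
  rw [MeasureTheory.integral_smul]
  rw [smul_eq_mul]

lemma volT : (volume T).toReal = 1/2 := by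
  have h1 : ∫ p in T, (1:ℝ) = (volume T).toReal := by rw [setIntegral_const]; simp [measureReal_def]
  rw [← h1, integral_T _ continuous_const]
  have hone : ∀ u : ℝ, (∫ v in (0:ℝ)..(1-u), (1:ℝ)) = 1 - u := by
    intro u; rw [intervalIntegral.integral_const]; simp
  simp only [hone]
  rw [intervalIntegral.integral_eq_sub_of_hasDerivAt
    (f := fun u : ℝ => (0:ℝ) + 1*u + (-1/2)*u^2 + 0*u^3 + 0*u^4 + 0*u^5 + 0*u^6 + 0*u^7 + 0*u^8)
    (f' := fun u : ℝ => 1 - u)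
    (fun x _ => by
      convert hasDerivAt_poly 0 1 (-1/2) 0 0 0 0 0 0 x using 1
      all_goals first | rfl | (funext t; ring) | (beta_reduce; ring))
    ((by fun_prop : Continuous fun u : ℝ => 1 - u).intervalIntegrable 0 1)]
  norm_num
end StingAux

open StingAux in
/-- Lemma 4.1: the quadrature rule for the sting function against cubic polynomials.
`β` is the unique affine function with `β V = 1`, `β A = β B = 0`, the sting function is
`s x = e (β x)` with `e t = (56 t³ − 63 t² + 18 t − 1)/10`, and for every polynomial `q`
of total degree at most 3, `∫_K s q = (|K|/100) q(V)` where `K = convexHull {A, B, V}`. -/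
theorem sting_quadrature_rule (A B V : ℝ × ℝ)
    (hindep : AffineIndependent ℝ ![A, B, V])
    (β : (ℝ × ℝ) →ᵃ[ℝ] ℝ) (hβV : β V = 1) (hβA : β A = 0) (hβB : β B = 0)
    (s : ℝ × ℝ → ℝ)
    (hs : ∀ x, s x = (56 * (β x) ^ 3 - 63 * (β x) ^ 2 + 18 * (β x) - 1) / 10)
    (q : MvPolynomial (Fin 2) ℝ) (hq : q.totalDegree ≤ 3)
    (Q : ℝ × ℝ → ℝ) (hQ : ∀ x, Q x = MvPolynomial.eval ![x.1, x.2] q) :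
    ∫ x in convexHull ℝ {A, B, V}, s x * Q x =
      (volume (convexHull ℝ {A, B, V} : Set (ℝ × ℝ))).toReal / 100 * Q V := by
  -- nondegeneracy
  have hD : (B.1-A.1)*(V.2-A.2) - (V.1-A.1)*(B.2-A.2) ≠ 0 := by
    intro h0
    rw [affineIndependent_iff_of_fintype] at hindep
    have key : ∀ s t : ℝ, s*(B.1-A.1) + t*(V.1-A.1) = 0 → s*(B.2-A.2) + t*(V.2-A.2) = 0 →
        s = 0 ∧ t = 0 := by
      intro s t e1 e2
      have hsum : ∑ i : Fin 3, (![-s-t, s, t] : Fin 3 → ℝ) i = 0 := by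
        rw [Fin.sum_univ_three]; simp; ring
      have hw := hindep ![-s-t, s, t] hsum
        (by
          rw [Finset.weightedVSub_eq_weightedVSubOfPoint_of_sum_eq_zero _ _ _ hsum A,
            Finset.weightedVSubOfPoint_apply, Fin.sum_univ_three]
          simp only [Matrix.cons_val_zero, Matrix.cons_val_one, Matrix.head_cons,
            Matrix.cons_val_two, Matrix.tail_cons, vsub_eq_sub]
          refine Prod.ext ?_ ?_ <;>
            simp only [Prod.fst_add, Prod.snd_add, Prod.smul_fst, Prod.smul_snd, Prod.fst_sub,
              Prod.snd_sub, smul_eq_mul, Prod.fst_zero, Prod.snd_zero] <;>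
            [linear_combination e1; linear_combination e2])
      exact ⟨by simpa using hw 1, by simpa using hw 2⟩
    obtain ⟨hc2, hb2⟩ := key (V.2-A.2) (-(B.2-A.2)) (by linear_combination h0) (by ring)
    obtain ⟨hc1, hb1⟩ := key (V.1-A.1) (-(B.1-A.1)) (by ring) (by linear_combination -h0)
    obtain ⟨habs, -⟩ := key 1 0 (by linarith) (by linarith)
    exact one_ne_zero habs
  -- rewrite the vertex set
  have hset : ({A, B, V} : Set (ℝ×ℝ)) =
      {((A.1, A.2) : ℝ×ℝ), (A.1 + (B.1-A.1), A.2 + (B.2-A.2)), (A.1 + (V.1-A.1), A.2 + (V.2-A.2))} := by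
    have eA : ((A.1, A.2) : ℝ×ℝ) = A := rfl
    have eB : ((A.1 + (B.1-A.1), A.2 + (B.2-A.2)) : ℝ×ℝ) = B := Prod.ext (by ring) (by ring)
    have eV : ((A.1 + (V.1-A.1), A.2 + (V.2-A.2)) : ℝ×ℝ) = V := Prod.ext (by ring) (by ring)
    rw [eA, eB, eV]
  -- volume
  have hvol : (volume (convexHull ℝ
        {((A.1, A.2) : ℝ×ℝ), (A.1 + (B.1-A.1), A.2 + (B.2-A.2)), (A.1 + (V.1-A.1), A.2 + (V.2-A.2))} :
        Set (ℝ×ℝ))).toReal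
      = |(B.1-A.1)*(V.2-A.2) - (V.1-A.1)*(B.2-A.2)| / 2 := by
    have h1 := cov A.1 A.2 (B.1-A.1) (B.2-A.2) (V.1-A.1) (V.2-A.2) hD (fun _ => (1:ℝ))
    simp only [setIntegral_const, smul_eq_mul, mul_one, measureReal_def, volT] at h1
    rw [h1]; ring
  -- β after the affine change of variables
  have hlinB : β.linear (B - A) = 0 := by
    rw [← vsub_eq_sub, AffineMap.linearMap_vsub, hβB, hβA]; simp
  have hlinV : β.linear (V - A) = 1 := by
    rw [← vsub_eq_sub, AffineMap.linearMap_vsub, hβV, hβA]; simp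
  have hβφ : ∀ p : ℝ×ℝ, β (A.1 + ((B.1-A.1)*p.1 + (V.1-A.1)*p.2),
      A.2 + ((B.2-A.2)*p.1 + (V.2-A.2)*p.2)) = p.2 := by
    intro p
    have hxy : ((A.1 + ((B.1-A.1)*p.1 + (V.1-A.1)*p.2),
        A.2 + ((B.2-A.2)*p.1 + (V.2-A.2)*p.2)) : ℝ×ℝ)
        = (p.1 • (B - A) + p.2 • (V - A)) +ᵥ A := by
      refine Prod.ext ?_ ?_ <;>
        simp only [vadd_eq_add, Prod.fst_add, Prod.snd_add, Prod.smul_fst, Prod.smul_snd,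
          Prod.fst_sub, Prod.snd_sub, smul_eq_mul] <;> ring
    rw [hxy, AffineMap.map_vadd, map_add, β.linear.map_smul, β.linear.map_smul, hlinB, hlinV]
    simp [hβA]
  -- degree bound for monomials in the support
  have hdeg : ∀ d ∈ q.support, d 0 + d 1 ≤ 3 := by
    intro d hd
    have h1 := MvPolynomial.le_totalDegree hd
    have h2 : (d.sum fun _ e => e) = d 0 + d 1 := by
      rw [Finsupp.sum_fintype _ _ (fun _ => rfl), Fin.sum_univ_two]
    rw [h2] at h1
    exact h1.trans hq
  -- decomposition of Q into monomials
  have hQd : ∀ x : ℝ×ℝ, Q x = ∑ d ∈ q.support,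
      MvPolynomial.coeff d q * (x.1 ^ d 0 * x.2 ^ d 1) := by
    intro x
    rw [hQ, MvPolynomial.eval_eq']
    refine Finset.sum_congr rfl fun d _ => ?_
    rw [Fin.prod_univ_two]
    simp
  rw [hset, cov A.1 A.2 (B.1-A.1) (B.2-A.2) (V.1-A.1) (V.2-A.2) hD]
  have hpt : ∀ p : ℝ×ℝ,
      s (A.1 + ((B.1-A.1)*p.1 + (V.1-A.1)*p.2), A.2 + ((B.2-A.2)*p.1 + (V.2-A.2)*p.2)) *
      Q (A.1 + ((B.1-A.1)*p.1 + (V.1-A.1)*p.2), A.2 + ((B.2-A.2)*p.1 + (V.2-A.2)*p.2))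
      = ∑ d ∈ q.support, MvPolynomial.coeff d q *
          ((56*p.2^3 - 63*p.2^2 + 18*p.2 - 1)/10 *
           ((A.1 + (B.1-A.1)*p.1 + (V.1-A.1)*p.2) ^ d 0 *
            (A.2 + (B.2-A.2)*p.1 + (V.2-A.2)*p.2) ^ d 1)) := by
    intro p
    rw [hs, hβφ p, hQd, Finset.mul_sum]
    refine Finset.sum_congr rfl fun d _ => ?_
    have h1 : ((A.1 + ((B.1-A.1)*p.1 + (V.1-A.1)*p.2),
        A.2 + ((B.2-A.2)*p.1 + (V.2-A.2)*p.2)) : ℝ×ℝ).1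
        = A.1 + (B.1-A.1)*p.1 + (V.1-A.1)*p.2 := by
      show A.1 + ((B.1-A.1)*p.1 + (V.1-A.1)*p.2) = _; ring
    have h2 : ((A.1 + ((B.1-A.1)*p.1 + (V.1-A.1)*p.2),
        A.2 + ((B.2-A.2)*p.1 + (V.2-A.2)*p.2)) : ℝ×ℝ).2
        = A.2 + (B.2-A.2)*p.1 + (V.2-A.2)*p.2 := by
      show A.2 + ((B.2-A.2)*p.1 + (V.2-A.2)*p.2) = _; ring
    rw [h1, h2]
    ring
  simp only [hpt]
  have hInt : ∀ d ∈ q.support, Integrable (fun p : ℝ×ℝ => MvPolynomial.coeff d q *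
      ((56*p.2^3 - 63*p.2^2 + 18*p.2 - 1)/10 *
       ((A.1 + (B.1-A.1)*p.1 + (V.1-A.1)*p.2) ^ d 0 *
        (A.2 + (B.2-A.2)*p.1 + (V.2-A.2)*p.2) ^ d 1))) (volume.restrict T) := by
    intro d _
    have hc : Continuous (fun p : ℝ×ℝ => MvPolynomial.coeff d q *
      ((56*p.2^3 - 63*p.2^2 + 18*p.2 - 1)/10 *
       ((A.1 + (B.1-A.1)*p.1 + (V.1-A.1)*p.2) ^ d 0 *
        (A.2 + (B.2-A.2)*p.1 + (V.2-A.2)*p.2) ^ d 1))) := by fun_prop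
    exact hc.continuousOn.integrableOn_compact isCompact_T
  rw [MeasureTheory.integral_finset_sum _ hInt]
  have hterm : ∀ d ∈ q.support,
      (∫ p in T, MvPolynomial.coeff d q *
        ((56*p.2^3 - 63*p.2^2 + 18*p.2 - 1)/10 *
         ((A.1 + (B.1-A.1)*p.1 + (V.1-A.1)*p.2) ^ d 0 *
          (A.2 + (B.2-A.2)*p.1 + (V.2-A.2)*p.2) ^ d 1)))
      = MvPolynomial.coeff d q * ((V.1 ^ d 0 * V.2 ^ d 1)/200) := by
    intro d hd
    rw [MeasureTheory.integral_const_mul,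
      lemmaMono A.1 (B.1-A.1) (V.1-A.1) A.2 (B.2-A.2) (V.2-A.2) (d 0) (d 1) (hdeg d hd),
      show A.1 + (V.1-A.1) = V.1 by ring, show A.2 + (V.2-A.2) = V.2 by ring]
  rw [Finset.sum_congr rfl hterm, hvol, hQd V, Finset.mul_sum, Finset.mul_sum]
  exact Finset.sum_congr rfl fun d _ => by ring
end

section
/- Let V, V₁, V₂ ∈ ℝ² be affinely independent with det(V₁ − V, V₂ − V) > 0 (i.e., V₁, V₂ numbered counterclockwise around V), let K = convexHull{V, V₁, V₂}, let β : ℝ² → ℝ be the affine function with β(V) = 1, β(V₁) = β(V₂) = 0, and let s(x) = e(β(x)) with e(t) = (56t³ − 63t² + 18t − 1)/10. Then for every map v : ℝ² → ℝ² whose two components are polynomials of total degree at most 4, ∫_K s(x) · div v(x) dx = (1/200) · [ (V₁ − V)⊥ · Dv(V)(V₂ − V) − (V₂ − V)⊥ · Dv(V)(V₁ − V) ], where Dv(V) is the (Fréchet) derivative of v at V, div v is the divergence of v, and w⊥ = (−w^y, w^x) is the 90-degree counterclockwise rotation of w. -/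
open MeasureTheory

private lemma ipoly (a b k0 k1 k2 k3 k4 k5 k6 k7 : ℝ) :
    (∫ x in a..b, (k0 + k1*x + k2*x^2 + k3*x^3 + k4*x^4 + k5*x^5 + k6*x^6 + k7*x^7)) =
      (k0*b^1 + k1/2*b^2 + k2/3*b^3 + k3/4*b^4 + k4/5*b^5 + k5/6*b^6 + k6/7*b^7 + k7/8*b^8)
      - (k0*a^1 + k1/2*a^2 + k2/3*a^3 + k3/4*a^4 + k4/5*a^5 + k5/6*a^6 + k6/7*a^7 + k7/8*a^8) := by
  have h : ∀ x : ℝ, HasDerivAt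
      (fun x : ℝ => k0*x^1 + k1/2*x^2 + k2/3*x^3 + k3/4*x^4 + k4/5*x^5 + k5/6*x^6 + k6/7*x^7
        + k7/8*x^8)
      (k0 + k1*x + k2*x^2 + k3*x^3 + k4*x^4 + k5*x^5 + k6*x^6 + k7*x^7) x := by
    intro x
    have H := ((((((((hasDerivAt_pow 1 x).const_mul k0).add
      ((hasDerivAt_pow 2 x).const_mul (k1/2))).add
      ((hasDerivAt_pow 3 x).const_mul (k2/3))).add
      ((hasDerivAt_pow 4 x).const_mul (k3/4))).add
      ((hasDerivAt_pow 5 x).const_mul (k4/5))).add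
      ((hasDerivAt_pow 6 x).const_mul (k5/6))).add
      ((hasDerivAt_pow 7 x).const_mul (k6/7))).add
      ((hasDerivAt_pow 8 x).const_mul (k7/8))
    refine H.congr_deriv ?_
    push_cast
    ring
  rw [intervalIntegral.integral_eq_sub_of_hasDerivAt (fun x _ => h x)
    ((Continuous.intervalIntegrable (by continuity) a b))]

private def Tri : Set (ℝ × ℝ) := {p | 0 ≤ p.1 ∧ 0 ≤ p.2 ∧ p.1 + p.2 ≤ 1}

private lemma isClosed_tri : IsClosed Tri := by
  have h1 : IsClosed {p : ℝ × ℝ | 0 ≤ p.1} := isClosed_le continuous_const continuous_fst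
  have h2 : IsClosed {p : ℝ × ℝ | 0 ≤ p.2} := isClosed_le continuous_const continuous_snd
  have h3 : IsClosed {p : ℝ × ℝ | p.1 + p.2 ≤ 1} :=
    isClosed_le (continuous_fst.add continuous_snd) continuous_const
  exact h1.inter (h2.inter h3)

private lemma isCompact_tri : IsCompact Tri := by
  have hsub : Tri ⊆ Set.Icc ((0:ℝ),(0:ℝ)) ((1:ℝ),(1:ℝ)) := by
    rintro ⟨u, w⟩ ⟨h1, h2, h3⟩
    simp only [Set.mem_Icc, Prod.mk_le_mk]
    exact ⟨⟨h1, h2⟩, by constructor <;> linarith⟩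
  exact (isCompact_Icc).of_isClosed_subset isClosed_tri hsub

private lemma measurableSet_tri : MeasurableSet Tri := isClosed_tri.measurableSet

private lemma moment (c00 c10 c01 c20 c11 c02 c30 c21 c12 c03 : ℝ) :
    (∫ p : ℝ × ℝ in Tri,
      (56*(1-p.1-p.2)^3 - 63*(1-p.1-p.2)^2 + 18*(1-p.1-p.2) - 1)/10 *
        (c00 + c10*p.1 + c01*p.2 + c20*p.1^2 + c11*p.1*p.2 + c02*p.2^2
          + c30*p.1^3 + c21*p.1^2*p.2 + c12*p.1*p.2^2 + c03*p.2^3)) = c00/200 := by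
  set G : ℝ × ℝ → ℝ := fun p =>
    (56*(1-p.1-p.2)^3 - 63*(1-p.1-p.2)^2 + 18*(1-p.1-p.2) - 1)/10 *
      (c00 + c10*p.1 + c01*p.2 + c20*p.1^2 + c11*p.1*p.2 + c02*p.2^2
        + c30*p.1^3 + c21*p.1^2*p.2 + c12*p.1*p.2^2 + c03*p.2^3) with hG
  have hGc : Continuous G := by fun_prop
  have hint : Integrable (Tri.indicator G) := by
    rw [integrable_indicator_iff measurableSet_tri]
    exact hGc.continuousOn.integrableOn_compact isCompact_tri
  rw [← integral_indicator measurableSet_tri]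
  rw [Measure.volume_eq_prod] at hint ⊢
  rw [integral_prod _ hint]
  have hinner : ∀ u : ℝ, (∫ w in (0:ℝ)..(1-u), G (u, w)) =
      ((1/10)*c00 + (1/200)*c01) +
      ((-1)*c00 + (1/10)*c10 + ((-1)/10)*c01 + (1/200)*c11 + ((-1)/100)*c02)*u +
      (3*c00 + (-1)*c10 + (1/2)*c01 + (1/10)*c20 + ((-1)/10)*c11 + (1/10)*c02 + (1/200)*c21 + ((-1)/100)*c12 + (3/200)*c03)*u^2 +
      (((-7)/2)*c00 + 3*c10 + (-1)*c01 + (-1)*c20 + (1/2)*c11 + ((-1)/3)*c02 + (1/10)*c30 + ((-1)/10)*c21 + (1/10)*c12 + ((-1)/10)*c03)*u^3 +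
      ((7/5)*c00 + ((-7)/2)*c10 + (7/8)*c01 + 3*c20 + (-1)*c11 + (1/2)*c02 + (-1)*c30 + (1/2)*c21 + ((-1)/3)*c12 + (1/4)*c03)*u^4 +
      ((7/5)*c10 + ((-7)/25)*c01 + ((-7)/2)*c20 + (7/8)*c11 + ((-7)/20)*c02 + 3*c30 + (-1)*c21 + (1/2)*c12 + ((-3)/10)*c03)*u^5 +
      ((7/5)*c20 + ((-7)/25)*c11 + (7/75)*c02 + ((-7)/2)*c30 + (7/8)*c21 + ((-7)/20)*c12 + (7/40)*c03)*u^6 +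
      ((7/5)*c30 + ((-7)/25)*c21 + (7/75)*c12 + ((-1)/25)*c03)*u^7 := by
    intro u
    rw [intervalIntegral.integral_congr (g := fun w : ℝ =>
        ((1*c00) + ((-6)*c00 + 1*c10)*u + ((21/2)*c00 + (-6)*c10 + 1*c20)*u^2 + (((-28)/5)*c00 + (21/2)*c10 + (-6)*c20 + 1*c30)*u^3 + (((-28)/5)*c10 + (21/2)*c20 + (-6)*c30)*u^4 + (((-28)/5)*c20 + (21/2)*c30)*u^5 + (((-28)/5)*c30)*u^6) +
        (((-6)*c00 + 1*c01) + (21*c00 + (-6)*c10 + (-6)*c01 + 1*c11)*u + (((-84)/5)*c00 + 21*c10 + (21/2)*c01 + (-6)*c20 + (-6)*c11 + 1*c21)*u^2 + (((-84)/5)*c10 + ((-28)/5)*c01 + 21*c20 + (21/2)*c11 + (-6)*c30 + (-6)*c21)*u^3 + (((-84)/5)*c20 + ((-28)/5)*c11 + 21*c30 + (21/2)*c21)*u^4 + (((-84)/5)*c30 + ((-28)/5)*c21)*u^5)*w +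
        (((21/2)*c00 + (-6)*c01 + 1*c02) + (((-84)/5)*c00 + (21/2)*c10 + 21*c01 + (-6)*c11 + (-6)*c02 + 1*c12)*u + (((-84)/5)*c10 + ((-84)/5)*c01 + (21/2)*c20 + 21*c11 + (21/2)*c02 + (-6)*c21 + (-6)*c12)*u^2 + (((-84)/5)*c20 + ((-84)/5)*c11 + ((-28)/5)*c02 + (21/2)*c30 + 21*c21 + (21/2)*c12)*u^3 + (((-84)/5)*c30 + ((-84)/5)*c21 + ((-28)/5)*c12)*u^4)*w^2 +
        ((((-28)/5)*c00 + (21/2)*c01 + (-6)*c02 + 1*c03) + (((-28)/5)*c10 + ((-84)/5)*c01 + (21/2)*c11 + 21*c02 + (-6)*c12 + (-6)*c03)*u + (((-28)/5)*c20 + ((-84)/5)*c11 + ((-84)/5)*c02 + (21/2)*c21 + 21*c12 + (21/2)*c03)*u^2 + (((-28)/5)*c30 + ((-84)/5)*c21 + ((-84)/5)*c12 + ((-28)/5)*c03)*u^3)*w^3 +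
        ((((-28)/5)*c01 + (21/2)*c02 + (-6)*c03) + (((-28)/5)*c11 + ((-84)/5)*c02 + (21/2)*c12 + 21*c03)*u + (((-28)/5)*c21 + ((-84)/5)*c12 + ((-84)/5)*c03)*u^2)*w^4 +
        ((((-28)/5)*c02 + (21/2)*c03) + (((-28)/5)*c12 + ((-84)/5)*c03)*u)*w^5 +
        ((((-28)/5)*c03))*w^6 +
        (0:ℝ)*w^7) (fun w _ => by simp only [hG]; ring)]
    rw [ipoly]
    ring
  have houter : ∀ u : ℝ, (∫ w : ℝ, Tri.indicator G (u, w)) =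
      (Set.Icc (0:ℝ) 1).indicator (fun u =>
        ((1/10)*c00 + (1/200)*c01) +
      ((-1)*c00 + (1/10)*c10 + ((-1)/10)*c01 + (1/200)*c11 + ((-1)/100)*c02)*u +
      (3*c00 + (-1)*c10 + (1/2)*c01 + (1/10)*c20 + ((-1)/10)*c11 + (1/10)*c02 + (1/200)*c21 + ((-1)/100)*c12 + (3/200)*c03)*u^2 +
      (((-7)/2)*c00 + 3*c10 + (-1)*c01 + (-1)*c20 + (1/2)*c11 + ((-1)/3)*c02 + (1/10)*c30 + ((-1)/10)*c21 + (1/10)*c12 + ((-1)/10)*c03)*u^3 +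
      ((7/5)*c00 + ((-7)/2)*c10 + (7/8)*c01 + 3*c20 + (-1)*c11 + (1/2)*c02 + (-1)*c30 + (1/2)*c21 + ((-1)/3)*c12 + (1/4)*c03)*u^4 +
      ((7/5)*c10 + ((-7)/25)*c01 + ((-7)/2)*c20 + (7/8)*c11 + ((-7)/20)*c02 + 3*c30 + (-1)*c21 + (1/2)*c12 + ((-3)/10)*c03)*u^5 +
      ((7/5)*c20 + ((-7)/25)*c11 + (7/75)*c02 + ((-7)/2)*c30 + (7/8)*c21 + ((-7)/20)*c12 + (7/40)*c03)*u^6 +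
      ((7/5)*c30 + ((-7)/25)*c21 + (7/75)*c12 + ((-1)/25)*c03)*u^7) u := by
    intro u
    by_cases hu : u ∈ Set.Icc (0:ℝ) 1
    · rw [Set.indicator_of_mem hu]
      obtain ⟨hu0, hu1⟩ := hu
      have hw : ∀ w : ℝ, Tri.indicator G (u, w)
          = (Set.Icc (0:ℝ) (1-u)).indicator (fun w => G (u, w)) w := by
        intro w
        by_cases hwm : w ∈ Set.Icc (0:ℝ) (1-u)
        · rw [Set.indicator_of_mem hwm, Set.indicator_of_mem]
          exact ⟨hu0, hwm.1, by linarith [hwm.2]⟩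
        · rw [Set.indicator_of_notMem hwm, Set.indicator_of_notMem]
          intro hmem
          exact hwm ⟨hmem.2.1, by linarith [hmem.2.2]⟩
      simp only [hw]
      rw [integral_indicator measurableSet_Icc, integral_Icc_eq_integral_Ioc,
        ← intervalIntegral.integral_of_le (by linarith : (0:ℝ) ≤ 1-u)]
      rw [hinner u]
    · rw [Set.indicator_of_notMem hu]
      have hw : ∀ w : ℝ, Tri.indicator G (u, w) = 0 := by
        intro w
        apply Set.indicator_of_notMem
        intro hmem
        exact hu ⟨hmem.1, by linarith [hmem.2.1, hmem.2.2]⟩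
      simp only [hw, integral_zero]
  simp only [houter]
  rw [integral_indicator measurableSet_Icc, integral_Icc_eq_integral_Ioc,
    ← intervalIntegral.integral_of_le (zero_le_one), ipoly]
  ring
private def IsCubic (f : ℝ → ℝ → ℝ) : Prop :=
  ∃ c00 c10 c01 c20 c11 c02 c30 c21 c12 c03 : ℝ, ∀ u w : ℝ,
    f u w = c00 + c10*u + c01*w + c20*u^2 + c11*u*w + c02*w^2
      + c30*u^3 + c21*u^2*w + c12*u*w^2 + c03*w^3

private lemma isCubic_congr {f g : ℝ → ℝ → ℝ} (h : ∀ u w, f u w = g u w) (hg : IsCubic g) :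
    IsCubic f := by
  obtain ⟨c00, c10, c01, c20, c11, c02, c30, c21, c12, c03, hc⟩ := hg
  exact ⟨c00, c10, c01, c20, c11, c02, c30, c21, c12, c03, fun u w => (h u w).trans (hc u w)⟩

private lemma isCubic_zero : IsCubic (fun _ _ => 0) :=
  ⟨0,0,0,0,0,0,0,0,0,0, fun u w => by ring⟩

private lemma isCubic_add {f g : ℝ → ℝ → ℝ} (hf : IsCubic f) (hg : IsCubic g) :
    IsCubic (fun u w => f u w + g u w) := by
  obtain ⟨a0,a1,a2,a3,a4,a5,a6,a7,a8,a9,ha⟩ := hf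
  obtain ⟨b0,b1,b2,b3,b4,b5,b6,b7,b8,b9,hb⟩ := hg
  exact ⟨a0+b0,a1+b1,a2+b2,a3+b3,a4+b4,a5+b5,a6+b6,a7+b7,a8+b8,a9+b9,
    fun u w => by show f u w + g u w = _; rw [ha u w, hb u w]; ring⟩

private lemma isCubic_const_mul {f : ℝ → ℝ → ℝ} (c : ℝ) (hf : IsCubic f) :
    IsCubic (fun u w => c * f u w) := by
  obtain ⟨a0,a1,a2,a3,a4,a5,a6,a7,a8,a9,ha⟩ := hf
  exact ⟨c*a0,c*a1,c*a2,c*a3,c*a4,c*a5,c*a6,c*a7,c*a8,c*a9,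
    fun u w => by show c * f u w = _; rw [ha u w]; ring⟩

private lemma isCubic_pow_mul_pow (e1 a1 b1 e2 a2 b2 : ℝ) {i j : ℕ} (hij : i + j ≤ 3) :
    IsCubic (fun u w => (e1 + a1*u + b1*w)^i * (e2 + a2*u + b2*w)^j) := by
  have hi : i ≤ 3 := by omega
  have hj : j ≤ 3 := by omega
  interval_cases i <;> interval_cases j
  · exact ⟨1, (0:ℝ), (0:ℝ), (0:ℝ), (0:ℝ), (0:ℝ), (0:ℝ), (0:ℝ), (0:ℝ), (0:ℝ),
      fun u w => by ring⟩
  · exact ⟨e2, a2, b2, (0:ℝ), (0:ℝ), (0:ℝ), (0:ℝ), (0:ℝ), (0:ℝ), (0:ℝ),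
      fun u w => by ring⟩
  · exact ⟨e2^2, 2*e2*a2, 2*e2*b2, a2^2, 2*a2*b2, b2^2, (0:ℝ), (0:ℝ), (0:ℝ), (0:ℝ),
      fun u w => by ring⟩
  · exact ⟨e2^3, 3*e2^2*a2, 3*e2^2*b2, 3*e2*a2^2, 6*e2*a2*b2, 3*e2*b2^2, a2^3, 3*a2^2*b2, 3*a2*b2^2, b2^3,
      fun u w => by ring⟩
  · exact ⟨e1, a1, b1, (0:ℝ), (0:ℝ), (0:ℝ), (0:ℝ), (0:ℝ), (0:ℝ), (0:ℝ),
      fun u w => by ring⟩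
  · exact ⟨e1*e2, a1*e2 + e1*a2, b1*e2 + e1*b2, a1*a2, b1*a2 + a1*b2, b1*b2, (0:ℝ), (0:ℝ), (0:ℝ), (0:ℝ),
      fun u w => by ring⟩
  · exact ⟨e1*e2^2, a1*e2^2 + 2*e1*e2*a2, b1*e2^2 + 2*e1*e2*b2, 2*a1*e2*a2 + e1*a2^2, 2*b1*e2*a2 + 2*a1*e2*b2 + 2*e1*a2*b2, 2*b1*e2*b2 + e1*b2^2, a1*a2^2, b1*a2^2 + 2*a1*a2*b2, 2*b1*a2*b2 + a1*b2^2, b1*b2^2,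
      fun u w => by ring⟩
  · exact absurd hij (by omega)
  · exact ⟨e1^2, 2*e1*a1, 2*e1*b1, a1^2, 2*a1*b1, b1^2, (0:ℝ), (0:ℝ), (0:ℝ), (0:ℝ),
      fun u w => by ring⟩
  · exact ⟨e1^2*e2, 2*e1*a1*e2 + e1^2*a2, 2*e1*b1*e2 + e1^2*b2, a1^2*e2 + 2*e1*a1*a2, 2*a1*b1*e2 + 2*e1*b1*a2 + 2*e1*a1*b2, b1^2*e2 + 2*e1*b1*b2, a1^2*a2, 2*a1*b1*a2 + a1^2*b2, b1^2*a2 + 2*a1*b1*b2, b1^2*b2,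
      fun u w => by ring⟩
  · exact absurd hij (by omega)
  · exact absurd hij (by omega)
  · exact ⟨e1^3, 3*e1^2*a1, 3*e1^2*b1, 3*e1*a1^2, 6*e1*a1*b1, 3*e1*b1^2, a1^3, 3*a1^2*b1, 3*a1*b1^2, b1^3,
      fun u w => by ring⟩
  · exact absurd hij (by omega)
  · exact absurd hij (by omega)
  · exact absurd hij (by omega)

private lemma totalDegree_pderiv_le (p : MvPolynomial (Fin 2) ℝ) (i : Fin 2) (n : ℕ)
    (h : p.totalDegree ≤ n + 1) : (MvPolynomial.pderiv i p).totalDegree ≤ n := by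
  conv_lhs => rw [MvPolynomial.as_sum p]
  rw [map_sum]
  refine le_trans (MvPolynomial.totalDegree_finset_sum _ _) (Finset.sup_le fun m hm => ?_)
  rw [MvPolynomial.pderiv_monomial]
  rcases Nat.eq_zero_or_pos (m i) with h0 | h0
  · simp [h0]
  · refine le_trans (MvPolynomial.totalDegree_monomial_le _ _) ?_
    have hdm : (m.sum fun _ e => e) ≤ n + 1 := le_trans (MvPolynomial.le_totalDegree hm) h
    rw [Finsupp.sum_fintype _ _ (fun _ => rfl)] at hdm
    rw [Finsupp.sum_fintype _ _ (fun _ => rfl)]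
    rw [Fin.sum_univ_two] at hdm
    rw [Fin.sum_univ_two]
    simp only [Finsupp.tsub_apply, Finsupp.single_apply, id_eq]
    fin_cases i <;> simp_all <;> omega

private lemma isCubic_eval_comp (d : MvPolynomial (Fin 2) ℝ) (hd : d.totalDegree ≤ 3)
    (e1 a1 b1 e2 a2 b2 : ℝ) :
    IsCubic (fun u w => MvPolynomial.eval ![e1 + a1*u + b1*w, e2 + a2*u + b2*w] d) := by
  have hrepr : ∀ u w : ℝ, MvPolynomial.eval ![e1 + a1*u + b1*w, e2 + a2*u + b2*w] d
      = ∑ m ∈ d.support, MvPolynomial.coeff m d *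
          ((e1 + a1*u + b1*w)^(m 0) * (e2 + a2*u + b2*w)^(m 1)) := by
    intro u w
    rw [MvPolynomial.eval_eq']
    refine Finset.sum_congr rfl fun m _ => ?_
    rw [Fin.prod_univ_two]
    simp [mul_assoc]
  refine isCubic_congr hrepr ?_
  have hkey : ∀ s : Finset (Fin 2 →₀ ℕ), (∀ m ∈ s, m 0 + m 1 ≤ 3) →
      IsCubic (fun u w => ∑ m ∈ s, MvPolynomial.coeff m d *
        ((e1 + a1*u + b1*w)^(m 0) * (e2 + a2*u + b2*w)^(m 1))) := by
    intro s
    induction s using Finset.induction_on with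
    | empty => intro _; simpa using isCubic_zero
    | @insert m s hms ih =>
        intro hall
        have h1 : IsCubic (fun u w => MvPolynomial.coeff m d *
            ((e1 + a1*u + b1*w)^(m 0) * (e2 + a2*u + b2*w)^(m 1))) :=
          isCubic_const_mul _ (isCubic_congr (fun u w => by ring)
            (isCubic_pow_mul_pow e1 a1 b1 e2 a2 b2 (hall m (Finset.mem_insert_self m s))))
        have h2 := ih fun m' hm' => hall m' (Finset.mem_insert_of_mem hm')
        refine isCubic_congr (fun u w => Finset.sum_insert hms) (isCubic_add h1 h2)
  refine hkey d.support fun m hm => ?_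
  have := le_trans (MvPolynomial.le_totalDegree hm) hd
  rw [Finsupp.sum_fintype _ _ (fun _ => rfl), Fin.sum_univ_two] at this
  exact this

private lemma convexHull_tri :
    convexHull ℝ {((0:ℝ),(0:ℝ)), ((1:ℝ),(0:ℝ)), ((0:ℝ),(1:ℝ))} = Tri := by
  apply le_antisymm
  · apply convexHull_min
    · rintro p hp
      simp only [Set.mem_insert_iff, Set.mem_singleton_iff] at hp
      rcases hp with rfl | rfl | rfl <;> simp [Tri] <;> norm_num
    · rintro x hx y hy a b ha hb hab
      obtain ⟨hx1, hx2, hx3⟩ := hx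
      obtain ⟨hy1, hy2, hy3⟩ := hy
      refine ⟨?_, ?_, ?_⟩ <;>
        simp only [Prod.fst_add, Prod.snd_add, Prod.smul_fst, Prod.smul_snd, smul_eq_mul]
      · have := mul_nonneg ha hx1; have := mul_nonneg hb hy1; linarith
      · have := mul_nonneg ha hx2; have := mul_nonneg hb hy2; linarith
      · nlinarith [mul_le_mul_of_nonneg_left hx3 ha, mul_le_mul_of_nonneg_left hy3 hb]
  · rintro ⟨u, w⟩ ⟨h1, h2, h3⟩
    have hA : ((0:ℝ),(0:ℝ)) ∈ convexHull ℝ {((0:ℝ),(0:ℝ)), ((1:ℝ),(0:ℝ)), ((0:ℝ),(1:ℝ))} :=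
      subset_convexHull _ _ (by simp)
    have hB : ((1:ℝ),(0:ℝ)) ∈ convexHull ℝ {((0:ℝ),(0:ℝ)), ((1:ℝ),(0:ℝ)), ((0:ℝ),(1:ℝ))} :=
      subset_convexHull _ _ (by simp)
    have hC : ((0:ℝ),(1:ℝ)) ∈ convexHull ℝ {((0:ℝ),(0:ℝ)), ((1:ℝ),(0:ℝ)), ((0:ℝ),(1:ℝ))} :=
      subset_convexHull _ _ (by simp)
    by_cases hs : u + w = 0
    · have hu0 : u = 0 := le_antisymm (by linarith) h1
      have hw0 : w = 0 := le_antisymm (by linarith) h2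
      rw [hu0, hw0]; exact hA
    · have hspos : 0 < u + w := lt_of_le_of_ne (by linarith) (Ne.symm hs)
      have hne : u + w ≠ 0 := hs
      have hQ := (convex_convexHull ℝ _) hB hC
        (show (0:ℝ) ≤ u/(u+w) from div_nonneg h1 hspos.le)
        (show (0:ℝ) ≤ w/(u+w) from div_nonneg h2 hspos.le)
        (show u/(u+w) + w/(u+w) = 1 by field_simp)
      have hP := (convex_convexHull ℝ _) hA hQ (by linarith : (0:ℝ) ≤ 1 - (u+w)) hspos.le
        (by ring : (1 - (u+w)) + (u+w) = 1)
      have heq : ((u,w) : ℝ × ℝ) = (1 - (u+w)) • ((0:ℝ),(0:ℝ))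
          + (u+w) • ((u/(u+w)) • ((1:ℝ),(0:ℝ)) + (w/(u+w)) • ((0:ℝ),(1:ℝ))) := by
        simp only [Prod.smul_mk, smul_eq_mul, Prod.mk_add_mk, Prod.mk.injEq]
        constructor <;> field_simp <;> ring
      rw [heq]
      exact hP

open MvPolynomial in
private lemma hasFDerivAt_peval (p : MvPolynomial (Fin 2) ℝ) (x : ℝ × ℝ) :
    HasFDerivAt (fun y : ℝ × ℝ => MvPolynomial.eval ![y.1, y.2] p)
      ((MvPolynomial.eval ![x.1, x.2] (MvPolynomial.pderiv 0 p)) • ContinuousLinearMap.fst ℝ ℝ ℝ +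
        (MvPolynomial.eval ![x.1, x.2] (MvPolynomial.pderiv 1 p)) • ContinuousLinearMap.snd ℝ ℝ ℝ)
      x := by
  induction p using MvPolynomial.induction_on with
  | C a =>
      simp only [eval_C, map_zero, MvPolynomial.pderiv_C, zero_smul, add_zero]
      exact hasFDerivAt_const a x
  | add p q hp hq =>
      have H := hp.add hq
      refine (H.congr_fderiv ?_).congr_of_eventuallyEq (Filter.Eventually.of_forall fun y => ?_)
      · simp only [map_add]
        module
      · simp
  | mul_X p i hp =>
      fin_cases i
      · have H := hp.mul (hasFDerivAt_fst (p := x))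
        simp only [Fin.zero_eta, Fin.isValue, map_mul, eval_X, Matrix.cons_val_zero]
        have hd0 : MvPolynomial.pderiv 0 (p * X 0) = MvPolynomial.pderiv 0 p * X 0 + p := by
          rw [MvPolynomial.pderiv_mul, MvPolynomial.pderiv_X_self, mul_one]
        have hd1 : MvPolynomial.pderiv 1 (p * X 0) = MvPolynomial.pderiv 1 p * X 0 := by
          rw [MvPolynomial.pderiv_mul, MvPolynomial.pderiv_X_of_ne (by decide), mul_zero, add_zero]
        rw [hd0, hd1]
        refine H.congr_fderiv ?_
        refine ContinuousLinearMap.ext fun z => ?_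
        simp only [map_add, map_mul, eval_X, Matrix.cons_val_zero,
          ContinuousLinearMap.add_apply, ContinuousLinearMap.smul_apply,
          ContinuousLinearMap.coe_fst', ContinuousLinearMap.coe_snd', smul_eq_mul]
        ring
      · have H := hp.mul (hasFDerivAt_snd (p := x))
        simp only [Fin.mk_one, Fin.isValue, map_mul, eval_X, Matrix.cons_val_one, Matrix.head_cons]
        have hd0 : MvPolynomial.pderiv 0 (p * X 1) = MvPolynomial.pderiv 0 p * X 1 := by
          rw [MvPolynomial.pderiv_mul, MvPolynomial.pderiv_X_of_ne (by decide), mul_zero, add_zero]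
        have hd1 : MvPolynomial.pderiv 1 (p * X 1) = MvPolynomial.pderiv 1 p * X 1 + p := by
          rw [MvPolynomial.pderiv_mul, MvPolynomial.pderiv_X_self, mul_one]
        rw [hd0, hd1]
        refine H.congr_fderiv ?_
        refine ContinuousLinearMap.ext fun z => ?_
        simp only [map_add, map_mul, eval_X, Matrix.cons_val_one, Matrix.head_cons, Matrix.cons_val_zero,
          ContinuousLinearMap.add_apply, ContinuousLinearMap.smul_apply,
          ContinuousLinearMap.coe_fst', ContinuousLinearMap.coe_snd', smul_eq_mul]
        ring

/-- The pointwise divergence of a planar vector field, evaluated via Fréchet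
derivatives of the two components. -/
noncomputable def pdiv (v : ℝ × ℝ → ℝ × ℝ) (x : ℝ × ℝ) : ℝ :=
  fderiv ℝ (fun y => (v y).1) x (1, 0) + fderiv ℝ (fun y => (v y).2) x (0, 1)

/-- Lemma 4.2: the quadrature rule for the sting function against the divergence of a
quartic vector field.  Here `V, V₁, V₂` are the vertices of `K` numbered
counterclockwise, `β` the barycentric coordinate of `V`, and `w⊥ = (−w.2, w.1)`. -/
theorem sting_divergence_quadrature (V V₁ V₂ : ℝ × ℝ)
    (hindep : AffineIndependent ℝ ![V, V₁, V₂])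
    (hccw : 0 < (V₁.1 - V.1) * (V₂.2 - V.2) - (V₁.2 - V.2) * (V₂.1 - V.1))
    (β : (ℝ × ℝ) →ᵃ[ℝ] ℝ) (hβV : β V = 1) (hβ1 : β V₁ = 0) (hβ2 : β V₂ = 0)
    (s : ℝ × ℝ → ℝ)
    (hs : ∀ x, s x = (56 * (β x) ^ 3 - 63 * (β x) ^ 2 + 18 * (β x) - 1) / 10)
    (p₁ p₂ : MvPolynomial (Fin 2) ℝ)
    (hp₁ : p₁.totalDegree ≤ 4) (hp₂ : p₂.totalDegree ≤ 4)
    (v : ℝ × ℝ → ℝ × ℝ)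
    (hv : ∀ x, v x = (MvPolynomial.eval ![x.1, x.2] p₁, MvPolynomial.eval ![x.1, x.2] p₂)) :
    ∫ x in convexHull ℝ {V, V₁, V₂}, s x * pdiv v x =
      (1 / 200) *
        (((-(V₁.2 - V.2)) * (fderiv ℝ v V (V₂ - V)).1 +
            (V₁.1 - V.1) * (fderiv ℝ v V (V₂ - V)).2) -
          ((-(V₂.2 - V.2)) * (fderiv ℝ v V (V₁ - V)).1 +
            (V₂.1 - V.1) * (fderiv ℝ v V (V₁ - V)).2)) := by
  classical
  set ax := V₁.1 - V.1 with hax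
  set ay := V₁.2 - V.2 with hay
  set bx := V₂.1 - V.1 with hbx
  set bw := V₂.2 - V.2 with hbw
  have hveq : v = fun y : ℝ × ℝ =>
      (MvPolynomial.eval ![y.1, y.2] p₁, MvPolynomial.eval ![y.1, y.2] p₂) := funext hv
  set A1 := MvPolynomial.eval ![V.1, V.2] (MvPolynomial.pderiv 0 p₁) with hA1
  set B1 := MvPolynomial.eval ![V.1, V.2] (MvPolynomial.pderiv 1 p₁) with hB1
  set A2 := MvPolynomial.eval ![V.1, V.2] (MvPolynomial.pderiv 0 p₂) with hA2
  set B2 := MvPolynomial.eval ![V.1, V.2] (MvPolynomial.pderiv 1 p₂) with hB2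
  have hvd : HasFDerivAt v
      ((A1 • ContinuousLinearMap.fst ℝ ℝ ℝ + B1 • ContinuousLinearMap.snd ℝ ℝ ℝ).prod
        (A2 • ContinuousLinearMap.fst ℝ ℝ ℝ + B2 • ContinuousLinearMap.snd ℝ ℝ ℝ)) V := by
    rw [hveq]
    exact (hasFDerivAt_peval p₁ V).prodMk (hasFDerivAt_peval p₂ V)
  have happ : ∀ z : ℝ × ℝ, fderiv ℝ v V z = (A1*z.1 + B1*z.2, A2*z.1 + B2*z.2) := by
    intro z
    rw [hvd.fderiv]
    simp only [ContinuousLinearMap.prod_apply, ContinuousLinearMap.add_apply,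
      ContinuousLinearMap.smul_apply, ContinuousLinearMap.coe_fst',
      ContinuousLinearMap.coe_snd', smul_eq_mul]
  have hpdiv : ∀ x : ℝ × ℝ, pdiv v x =
      MvPolynomial.eval ![x.1, x.2] (MvPolynomial.pderiv 0 p₁) +
      MvPolynomial.eval ![x.1, x.2] (MvPolynomial.pderiv 1 p₂) := by
    intro x
    have h1 : (fun y : ℝ × ℝ => (v y).1) = fun y : ℝ × ℝ => MvPolynomial.eval ![y.1, y.2] p₁ := by
      funext y; rw [hv]
    have h2 : (fun y : ℝ × ℝ => (v y).2) = fun y : ℝ × ℝ => MvPolynomial.eval ![y.1, y.2] p₂ := by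
      funext y; rw [hv]
    unfold pdiv
    rw [h1, h2, (hasFDerivAt_peval p₁ x).fderiv, (hasFDerivAt_peval p₂ x).fderiv]
    simp only [ContinuousLinearMap.add_apply, ContinuousLinearMap.smul_apply,
      ContinuousLinearMap.coe_fst', ContinuousLinearMap.coe_snd', smul_eq_mul]
    ring
  have hz1 : V₁ - V = ((ax, ay) : ℝ × ℝ) := by
    rw [Prod.ext_iff]
    exact ⟨by simp [Prod.fst_sub, hax], by simp [Prod.snd_sub, hay]⟩
  have hz2 : V₂ - V = ((bx, bw) : ℝ × ℝ) := by
    rw [Prod.ext_iff]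
    exact ⟨by simp [Prod.fst_sub, hbx], by simp [Prod.snd_sub, hbw]⟩
  have hRa1 : (fderiv ℝ v V (V₁ - V)).1 = A1*ax + B1*ay := by rw [hz1, happ]
  have hRa2 : (fderiv ℝ v V (V₁ - V)).2 = A2*ax + B2*ay := by rw [hz1, happ]
  have hRb1 : (fderiv ℝ v V (V₂ - V)).1 = A1*bx + B1*bw := by rw [hz2, happ]
  have hRb2 : (fderiv ℝ v V (V₂ - V)).2 = A2*bx + B2*bw := by rw [hz2, happ]
  rw [hRa1, hRa2, hRb1, hRb2]
  set M : ℝ × ℝ →L[ℝ] ℝ × ℝ :=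
    (ax • ContinuousLinearMap.fst ℝ ℝ ℝ + bx • ContinuousLinearMap.snd ℝ ℝ ℝ).prod
      (ay • ContinuousLinearMap.fst ℝ ℝ ℝ + bw • ContinuousLinearMap.snd ℝ ℝ ℝ) with hM
  have hMdet : M.det = ax * bw - ay * bx := by
    rw [hM, ← Matrix.toLin_finTwoProd_toContinuousLinearMap,
      LinearMap.det_toContinuousLinearMap, LinearMap.det_toLin, Matrix.det_fin_two_of]
    ring
  have hMapp : ∀ u : ℝ × ℝ, M u = (ax*u.1 + bx*u.2, ay*u.1 + bw*u.2) := by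
    intro u
    rw [hM]
    simp only [ContinuousLinearMap.prod_apply, ContinuousLinearMap.add_apply,
      ContinuousLinearMap.smul_apply, ContinuousLinearMap.coe_fst',
      ContinuousLinearMap.coe_snd', smul_eq_mul]
  set T : ℝ × ℝ → ℝ × ℝ := fun u => (V.1 + ax*u.1 + bx*u.2, V.2 + ay*u.1 + bw*u.2) with hT
  have hTM : ∀ u : ℝ × ℝ, T u = M u + V := by
    intro u
    rw [hMapp, hT, Prod.ext_iff]
    constructor <;> simp <;> ring
  have hTd : ∀ u ∈ Tri, HasFDerivWithinAt T M Tri u := by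
    intro u _
    have hfun : T = fun y => M y + V := funext hTM
    rw [hfun]
    exact ((M.hasFDerivAt).add_const V).hasFDerivWithinAt
  have hdet0 : ax * bw - ay * bx ≠ 0 := ne_of_gt hccw
  have hTinj : Set.InjOn T Tri := by
    intro p _ q _ hpq
    have e1 : V.1 + ax*p.1 + bx*p.2 = V.1 + ax*q.1 + bx*q.2 := by
      simpa [hT] using congrArg Prod.fst hpq
    have e2 : V.2 + ay*p.1 + bw*p.2 = V.2 + ay*q.1 + bw*q.2 := by
      simpa [hT] using congrArg Prod.snd hpq
    have k1 : (p.1 - q.1) * (ax*bw - ay*bx) = 0 := by linear_combination bw * e1 - bx * e2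
    have k2 : (p.2 - q.2) * (ax*bw - ay*bx) = 0 := by linear_combination ax * e2 - ay * e1
    have hp1 : p.1 = q.1 := by
      rcases mul_eq_zero.mp k1 with h | h
      · linarith
      · exact absurd h hdet0
    have hp2 : p.2 = q.2 := by
      rcases mul_eq_zero.mp k2 with h | h
      · linarith
      · exact absurd h hdet0
    exact Prod.ext_iff.mpr ⟨hp1, hp2⟩
  set Taff : (ℝ × ℝ) →ᵃ[ℝ] (ℝ × ℝ) := AffineMap.mk' T (M : (ℝ × ℝ) →ₗ[ℝ] (ℝ × ℝ)) ((0:ℝ),(0:ℝ))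
    (by
      intro p'
      show T p' = M (p' - ((0:ℝ),(0:ℝ))) + T ((0:ℝ),(0:ℝ))
      rw [hTM, hTM, hMapp, hMapp, hMapp, Prod.ext_iff]
      constructor <;> simp <;> ring) with hTaff
  have himg : T '' Tri = convexHull ℝ {V, V₁, V₂} := by
    rw [← convexHull_tri, show T = ⇑Taff from rfl, AffineMap.image_convexHull]
    have h0 : Taff ((0:ℝ),(0:ℝ)) = V := by
      show T ((0:ℝ),(0:ℝ)) = V
      rw [hT]
      simp
    have h1 : Taff ((1:ℝ),(0:ℝ)) = V₁ := by
      show T ((1:ℝ),(0:ℝ)) = V₁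
      rw [hT, Prod.ext_iff]
      constructor <;> simp [hax, hay]
    have h2 : Taff ((0:ℝ),(1:ℝ)) = V₂ := by
      show T ((0:ℝ),(1:ℝ)) = V₂
      rw [hT, Prod.ext_iff]
      constructor <;> simp [hbx, hbw]
    rw [Set.image_insert_eq, Set.image_insert_eq, Set.image_singleton, h0, h1, h2]
  have hdeg : (MvPolynomial.pderiv 0 p₁ + MvPolynomial.pderiv 1 p₂).totalDegree ≤ 3 :=
    le_trans (MvPolynomial.totalDegree_add _ _)
      (max_le (totalDegree_pderiv_le p₁ 0 3 hp₁) (totalDegree_pderiv_le p₂ 1 3 hp₂))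
  obtain ⟨c00, c10, c01, c20, c11, c02, c30, c21, c12, c03, hrep⟩ :=
    isCubic_eval_comp (MvPolynomial.pderiv 0 p₁ + MvPolynomial.pderiv 1 p₂) hdeg V.1 ax bx V.2 ay bw
  have hc00 : c00 = A1 + B2 := by
    have h := hrep 0 0
    simp only [map_add] at h
    norm_num at h
    rw [hA1, hB2]
    exact h.symm
  have hV1 : ((ax, ay) : ℝ × ℝ) + V = V₁ := by
    rw [Prod.ext_iff]
    constructor <;> simp [hax, hay]
  have hV2 : ((bx, bw) : ℝ × ℝ) + V = V₂ := by
    rw [Prod.ext_iff]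
    constructor <;> simp [hbx, hbw]
  have hβa : β.linear ((ax, ay) : ℝ × ℝ) = -1 := by
    have h := β.map_vadd V ((ax, ay) : ℝ × ℝ)
    rw [vadd_eq_add, hV1, vadd_eq_add, hβ1, hβV] at h
    linarith
  have hβb : β.linear ((bx, bw) : ℝ × ℝ) = -1 := by
    have h := β.map_vadd V ((bx, bw) : ℝ × ℝ)
    rw [vadd_eq_add, hV2, vadd_eq_add, hβ2, hβV] at h
    linarith
  have hsT : ∀ p : ℝ × ℝ, s (T p) =
      (56*(1-p.1-p.2)^3 - 63*(1-p.1-p.2)^2 + 18*(1-p.1-p.2) - 1)/10 := by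
    intro p
    have hTp : T p = (p.1 • ((ax, ay) : ℝ × ℝ) + p.2 • ((bx, bw) : ℝ × ℝ)) +ᵥ V := by
      rw [hT, vadd_eq_add, Prod.ext_iff]
      constructor <;> simp <;> ring
    have hβT : β (T p) = 1 - p.1 - p.2 := by
      rw [hTp, β.map_vadd, map_add, LinearMap.map_smul, LinearMap.map_smul, hβa, hβb,
        vadd_eq_add, hβV, smul_eq_mul, smul_eq_mul]
      ring
    rw [hs, hβT]
  rw [← himg, integral_image_eq_integral_abs_det_fderiv_smul volume measurableSet_tri hTd hTinj]
  rw [setIntegral_congr_fun measurableSet_tri (g := fun p : ℝ × ℝ =>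
    (ax*bw - ay*bx) • ((56*(1-p.1-p.2)^3 - 63*(1-p.1-p.2)^2 + 18*(1-p.1-p.2) - 1)/10 *
      (c00 + c10*p.1 + c01*p.2 + c20*p.1^2 + c11*p.1*p.2 + c02*p.2^2
        + c30*p.1^3 + c21*p.1^2*p.2 + c12*p.1*p.2^2 + c03*p.2^3)))
    (fun p _ => by
      simp only
      rw [hMdet, abs_of_pos hccw, hsT p, hpdiv (T p)]
      have h := hrep p.1 p.2
      simp only [map_add] at h
      simp only [hT]
      rw [h])]
  rw [integral_smul, moment, smul_eq_mul, hc00]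
  ring
end

section
/- Let K̂ = {(x, y) ∈ ℝ² : x ≥ 0, y ≥ 0, x + y ≤ 1} and set a = (3 − √6)/6 and b = 1 − a. For every polynomial p : ℝ² → ℝ of total degree at most 6, ∫_{K̂} p(x, y) dx dy = (1/2)·[ −(5/252)(p(0,0) + p(1,0) + p(0,1)) + (3/70)(p(0,a) + p(0,b) + p(a,0) + p(b,0) + p(a,b) + p(b,a)) + (17/315)(p(0,1/2) + p(1/2,0) + p(1/2,1/2)) + (128/315)(p(1/4,1/4) + p(1/4,1/2) + p(1/2,1/4)) − (81/140)·p(1/3,1/3) ]. -/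
set_option maxHeartbeats 1000000

open MeasureTheory intervalIntegral Set

private lemma lyness_beta_nat (m : ℕ) : ∀ i : ℕ, ∫ x in (0:ℝ)..1, x ^ i * (1 - x) ^ m
    = (Nat.factorial i * Nat.factorial m : ℝ) / Nat.factorial (i + m + 1) := by
  induction m with
  | zero =>
    intro i
    simp only [pow_zero, mul_one, integral_pow, one_pow, Nat.add_zero, Nat.factorial]
    rw [show (0:ℝ) ^ (i+1) = 0 by simp]
    have hfi : (Nat.factorial i : ℝ) ≠ 0 := by positivity
    push_cast [Nat.succ_eq_add_one]
    field_simp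
    simp
  | succ m ih =>
    intro i
    have hi : ((i : ℝ) + 1) ≠ 0 := by positivity
    have hu : ∀ x ∈ Set.uIcc (0:ℝ) 1, HasDerivAt (fun x : ℝ => (1 - x) ^ (m + 1))
        ((m + 1 : ℕ) * (1 - x) ^ m * (-1)) x := by
      intro x _
      have h1 : HasDerivAt (fun x : ℝ => 1 - x) (-1) x := (hasDerivAt_id x).const_sub 1
      have := h1.fun_pow (m + 1)
      simpa using this
    have hv : ∀ x ∈ Set.uIcc (0:ℝ) 1, HasDerivAt (fun x : ℝ => x ^ (i + 1) / (i + 1))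
        (x ^ i) x := by
      intro x _
      have : HasDerivAt (fun x : ℝ => x ^ (i + 1) / ((i:ℝ) + 1))
          (((i + 1 : ℕ) : ℝ) * x ^ (i + 1 - 1) / ((i:ℝ) + 1)) x :=
        (hasDerivAt_pow (i + 1) x).div_const ((i : ℝ) + 1)
      convert this using 1
      push_cast
      field_simp
    have hIu : IntervalIntegrable (fun x : ℝ => (m + 1 : ℕ) * (1 - x) ^ m * (-1)) volume 0 1 :=
      (Continuous.intervalIntegrable (by continuity) _ _)
    have hIv : IntervalIntegrable (fun x : ℝ => x ^ i) volume 0 1 :=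
      (Continuous.intervalIntegrable (by continuity) _ _)
    have H := intervalIntegral.integral_mul_deriv_eq_deriv_mul hu hv hIu hIv
    have comm : ∫ x in (0:ℝ)..1, x ^ i * (1 - x) ^ (m+1)
        = ∫ x in (0:ℝ)..1, (1 - x) ^ (m+1) * x ^ i := by
      congr 1; funext x; ring
    rw [comm, H]
    have expand : (∫ x in (0:ℝ)..1, (m + 1 : ℕ) * (1 - x) ^ m * (-1) * (x ^ (i+1) / (i + 1)))
        = (-(m+1) / (i+1)) * ∫ x in (0:ℝ)..1, x ^ (i+1) * (1 - x) ^ m := by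
      rw [← intervalIntegral.integral_const_mul]
      congr 1; funext x; push_cast; field_simp
    rw [expand, ih (i + 1)]
    have h1 : ((Nat.factorial (i+1) : ℝ)) = (i+1) * Nat.factorial i := by
      rw [Nat.factorial_succ]; push_cast; ring
    have h2 : ((Nat.factorial (m+1) : ℝ)) = (m+1) * Nat.factorial m := by
      rw [Nat.factorial_succ]; push_cast; ring
    rw [show ((1:ℝ)-1)^(m+1) = 0 by norm_num, show (0:ℝ)^(i+1) = 0 by simp,
      show i+1+m+1 = i+(m+1)+1 from by omega, h1, h2]
    have hfi : (Nat.factorial i : ℝ) ≠ 0 := by positivity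
    have hfm : (Nat.factorial m : ℝ) ≠ 0 := by positivity
    have hfac : (Nat.factorial (i + (m+1) + 1) : ℝ) ≠ 0 := by positivity
    field_simp
    ring

private lemma lyness_tri_closed :
    IsClosed {z : ℝ × ℝ | 0 ≤ z.1 ∧ 0 ≤ z.2 ∧ z.1 + z.2 ≤ 1} := by
  apply IsClosed.inter (isClosed_le continuous_const continuous_fst)
  exact IsClosed.inter (isClosed_le continuous_const continuous_snd)
    (isClosed_le (continuous_fst.add continuous_snd) continuous_const)

private lemma lyness_tri_compact :
    IsCompact {z : ℝ × ℝ | 0 ≤ z.1 ∧ 0 ≤ z.2 ∧ z.1 + z.2 ≤ 1} := by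
  apply IsCompact.of_isClosed_subset (isCompact_Icc (a := ((0:ℝ),(0:ℝ))) (b := (1,1)))
    lyness_tri_closed
  rintro ⟨x, y⟩ ⟨h1, h2, h3⟩
  constructor
  · exact ⟨h1, h2⟩
  · exact ⟨by dsimp at *; linarith, by dsimp at *; linarith⟩

private lemma lyness_tri_integrableOn (f : ℝ × ℝ → ℝ) (hf : Continuous f) :
    IntegrableOn f {z : ℝ × ℝ | 0 ≤ z.1 ∧ 0 ≤ z.2 ∧ z.1 + z.2 ≤ 1} :=
  hf.continuousOn.integrableOn_compact lyness_tri_compact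

private lemma lyness_tri_int (i j : ℕ) :
    ∫ z in {z : ℝ × ℝ | 0 ≤ z.1 ∧ 0 ≤ z.2 ∧ z.1 + z.2 ≤ 1}, z.1 ^ i * z.2 ^ j
      = (Nat.factorial i * Nat.factorial j : ℝ) / Nat.factorial (i + j + 2) := by
  set T := {z : ℝ × ℝ | 0 ≤ z.1 ∧ 0 ≤ z.2 ∧ z.1 + z.2 ≤ 1} with hT
  have hTm : MeasurableSet T := lyness_tri_closed.measurableSet
  have hcont : Continuous (fun z : ℝ × ℝ => z.1 ^ i * z.2 ^ j) := by continuity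
  have hint : Integrable (T.indicator (fun z : ℝ × ℝ => z.1 ^ i * z.2 ^ j)) volume :=
    (lyness_tri_integrableOn _ hcont).integrable_indicator hTm
  rw [← MeasureTheory.integral_indicator hTm]
  rw [MeasureTheory.Measure.volume_eq_prod] at hint ⊢
  rw [MeasureTheory.integral_prod _ hint]
  have key : ∀ x : ℝ, (∫ y : ℝ, T.indicator (fun z : ℝ × ℝ => z.1 ^ i * z.2 ^ j) (x, y))
      = (Icc (0:ℝ) 1).indicator (fun x => ∫ y in Icc (0:ℝ) (1 - x), x ^ i * y ^ j) x := by
    intro x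
    by_cases hx : x ∈ Icc (0:ℝ) 1
    · rw [indicator_of_mem hx]
      rw [← MeasureTheory.integral_indicator (measurableSet_Icc)]
      congr 1
      funext y
      by_cases hy : y ∈ Icc (0:ℝ) (1 - x)
      · rw [indicator_of_mem hy, indicator_of_mem]
        simp only [hT, mem_setOf_eq]
        obtain ⟨h1, h2⟩ := hx; obtain ⟨h3, h4⟩ := hy
        exact ⟨h1, h3, by linarith⟩
      · rw [indicator_of_notMem hy, indicator_of_notMem]
        simp only [hT, mem_setOf_eq]
        intro ⟨h1, h2, h3⟩
        exact hy ⟨h2, by linarith⟩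
    · rw [indicator_of_notMem hx]
      have : ∀ y : ℝ, T.indicator (fun z : ℝ × ℝ => z.1 ^ i * z.2 ^ j) (x, y) = 0 := by
        intro y
        apply indicator_of_notMem
        simp only [hT, mem_setOf_eq]
        intro ⟨h1, h2, h3⟩
        exact hx ⟨h1, by linarith⟩
      simp [this]
  simp_rw [key]
  rw [MeasureTheory.integral_indicator measurableSet_Icc]
  have inner : ∀ x ∈ Icc (0:ℝ) 1, (∫ y in Icc (0:ℝ) (1 - x), x ^ i * y ^ j)
      = x ^ i * ((1 - x) ^ (j + 1)) / (j + 1) := by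
    intro x hx
    rw [MeasureTheory.integral_Icc_eq_integral_Ioc,
      ← intervalIntegral.integral_of_le (by obtain ⟨h1, h2⟩ := hx; linarith : (0:ℝ) ≤ 1 - x),
      intervalIntegral.integral_const_mul, integral_pow]
    rw [show (0:ℝ) ^ (j+1) = 0 by simp]
    ring
  rw [MeasureTheory.setIntegral_congr_fun measurableSet_Icc inner]
  have outer : (∫ x in Icc (0:ℝ) 1, x ^ i * (1 - x) ^ (j + 1) / (j + 1))
      = (1 / (j+1 : ℝ)) * ∫ x in (0:ℝ)..1, x ^ i * (1 - x) ^ (j+1) := by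
    rw [MeasureTheory.integral_Icc_eq_integral_Ioc,
      ← intervalIntegral.integral_of_le (by norm_num : (0:ℝ) ≤ 1),
      ← intervalIntegral.integral_const_mul]
    congr 1; funext x; ring
  rw [outer, lyness_beta_nat (j+1) i]
  have h2 : ((Nat.factorial (j+1) : ℝ)) = (j+1) * Nat.factorial j := by
    rw [Nat.factorial_succ]; push_cast; ring
  rw [show i + (j+1) + 1 = i + j + 2 from by omega, h2]
  have hfi : (Nat.factorial (i+j+2) : ℝ) ≠ 0 := by positivity
  have hj : ((j:ℝ) + 1) ≠ 0 := by positivity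
  field_simp

private noncomputable def lynessQfun (a b : ℝ) (f : ℝ → ℝ → ℝ) : ℝ :=
  (1 / 2) *
    (-(5 / 252) * (f 0 0 + f 1 0 + f 0 1) +
      (3 / 70) * (f 0 a + f 0 b + f a 0 + f b 0 + f a b + f b a) +
      (17 / 315) * (f 0 (1/2) + f (1/2) 0 + f (1/2) (1/2)) +
      (128 / 315) * (f (1/4) (1/4) + f (1/4) (1/2) + f (1/2) (1/4)) -
      (81 / 140) * f (1/3) (1/3))

private noncomputable def lynessQlin (a b : ℝ) : (ℝ → ℝ → ℝ) →ₗ[ℝ] ℝ where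
  toFun := lynessQfun a b
  map_add' f g := by simp only [lynessQfun, Pi.add_apply]; ring
  map_smul' c f := by simp only [lynessQfun, Pi.smul_apply, smul_eq_mul, RingHom.id_apply]; ring

private lemma lyness_mono_rule (a b : ℝ) (ha : a = (3 - Real.sqrt 6) / 6) (hb : b = 1 - a)
    (i j : ℕ) (hij : i + j ≤ 6) :
    (Nat.factorial i * Nat.factorial j : ℝ) / Nat.factorial (i + j + 2) =
      lynessQfun a b (fun x y => x ^ i * y ^ j) := by
  simp only [lynessQfun]
  subst hb; subst ha
  have hs : Real.sqrt 6 ^ 2 = 6 := Real.sq_sqrt (by norm_num)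
  set s := Real.sqrt 6 with hsdef
  have h3 : s ^ 3 = 6 * s := by rw [show (3:ℕ) = 2 + 1 from rfl, pow_succ, hs]
  have h4 : s ^ 4 = 36 := by rw [show (4:ℕ) = 2 * 2 from rfl, pow_mul, hs]; norm_num
  have h5 : s ^ 5 = 36 * s := by rw [show (5:ℕ) = 4 + 1 from rfl, pow_succ, h4]
  have h6 : s ^ 6 = 216 := by rw [show (6:ℕ) = 2 * 3 from rfl, pow_mul, hs]; norm_num
  have hi6 : i ≤ 6 := by omega
  have hj6 : j ≤ 6 := by omega
  interval_cases i <;> interval_cases j <;>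
    first
      | omega
      | (norm_num [Nat.factorial] <;> ring_nf <;> linarith [hs, h3, h4, h5, h6])

open MeasureTheory

/-- The 16-point Lyness quadrature rule (equations (6.1)–(6.2)) on the reference
triangle with vertices `(0,0)`, `(1,0)`, `(0,1)`: it integrates exactly every bivariate
polynomial of total degree at most 6. -/
theorem lyness_sixteen_point_rule (a b : ℝ)
    (ha : a = (3 - Real.sqrt 6) / 6) (hb : b = 1 - a)
    (p : MvPolynomial (Fin 2) ℝ) (hp : p.totalDegree ≤ 6)
    (P : ℝ → ℝ → ℝ) (hP : ∀ x y, P x y = MvPolynomial.eval ![x, y] p) :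
    ∫ z in {z : ℝ × ℝ | 0 ≤ z.1 ∧ 0 ≤ z.2 ∧ z.1 + z.2 ≤ 1}, P z.1 z.2 =
      (1 / 2) *
        (-(5 / 252) * (P 0 0 + P 1 0 + P 0 1) +
          (3 / 70) * (P 0 a + P 0 b + P a 0 + P b 0 + P a b + P b a) +
          (17 / 315) * (P 0 (1/2) + P (1/2) 0 + P (1/2) (1/2)) +
          (128 / 315) * (P (1/4) (1/4) + P (1/4) (1/2) + P (1/2) (1/4)) -
          (81 / 140) * P (1/3) (1/3)) := by
  have hP2 : ∀ x y : ℝ, P x y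
      = ∑ d ∈ p.support, MvPolynomial.coeff d p * (x ^ d 0 * y ^ d 1) := by
    intro x y
    rw [hP, MvPolynomial.eval_eq']
    apply Finset.sum_congr rfl
    intro d _
    congr 1
    rw [Fin.prod_univ_two]
    simp
  have hdeg : ∀ d ∈ p.support, d 0 + d 1 ≤ 6 := by
    intro d hd
    have h := MvPolynomial.le_totalDegree hd
    have h2 : (d.sum fun _ e => e) = d 0 + d 1 := by
      rw [Finsupp.sum_fintype _ _ (fun _ => rfl), Fin.sum_univ_two]
    omega
  have hPfun : P = ∑ d ∈ p.support,
      (MvPolynomial.coeff d p) • (fun x y : ℝ => x ^ d 0 * y ^ d 1) := by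
    funext x y
    rw [hP2]
    simp [Finset.sum_apply, Pi.smul_apply, smul_eq_mul]
  have lhs_eq : (∫ z in {z : ℝ × ℝ | 0 ≤ z.1 ∧ 0 ≤ z.2 ∧ z.1 + z.2 ≤ 1}, P z.1 z.2)
      = ∑ d ∈ p.support, MvPolynomial.coeff d p *
          ((Nat.factorial (d 0) * Nat.factorial (d 1) : ℝ) / Nat.factorial (d 0 + d 1 + 2)) := by
    have step1 : (∫ z in {z : ℝ × ℝ | 0 ≤ z.1 ∧ 0 ≤ z.2 ∧ z.1 + z.2 ≤ 1}, P z.1 z.2)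
        = ∫ z in {z : ℝ × ℝ | 0 ≤ z.1 ∧ 0 ≤ z.2 ∧ z.1 + z.2 ≤ 1},
            ∑ d ∈ p.support, MvPolynomial.coeff d p * (z.1 ^ d 0 * z.2 ^ d 1) := by
      congr 1
      funext z
      exact hP2 z.1 z.2
    rw [step1, MeasureTheory.integral_finset_sum]
    · apply Finset.sum_congr rfl
      intro d _
      rw [MeasureTheory.integral_const_mul, lyness_tri_int (d 0) (d 1)]
    · intro d _
      exact (lyness_tri_integrableOn _ (by continuity)).const_mul _
  rw [lhs_eq]
  have rhs_eq : (1 / 2) *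
        (-(5 / 252) * (P 0 0 + P 1 0 + P 0 1) +
          (3 / 70) * (P 0 a + P 0 b + P a 0 + P b 0 + P a b + P b a) +
          (17 / 315) * (P 0 (1/2) + P (1/2) 0 + P (1/2) (1/2)) +
          (128 / 315) * (P (1/4) (1/4) + P (1/4) (1/2) + P (1/2) (1/4)) -
          (81 / 140) * P (1/3) (1/3)) = lynessQlin a b P := rfl
  rw [rhs_eq, hPfun, map_sum]
  apply Finset.sum_congr rfl
  intro d hd
  rw [_root_.map_smul, smul_eq_mul]
  congr 1
  exact lyness_mono_rule a b ha hb (d 0) (d 1) (hdeg d hd)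
end

section
/- Let V, V⁺, V⁻ ∈ ℝ² be affinely independent, G = (V + V⁺ + V⁻)/3 the centroid, i = (G − V)/‖G − V‖, and μ(x) = i⊥ · (x − G) where i⊥ is the 90-degree counterclockwise rotation of i. Assume μ(V⁺) > 0 and set d = μ(V⁺) (so that μ(V⁻) = −d). Define g⁺(x) = ι⁺(μ(x)/d) and g⁻(x) = ι⁻(μ(x)/d) with ι⁺(t) = 8t³ + 3t² and ι⁻(t) = 8t³ − 3t². Let G₀ = ½V + ¼V⁺ + ¼V⁻, G⁺ = ¼V + ½V⁺ + ¼V⁻, G⁻ = ¼V + ¼V⁺ + ½V⁻. Then: ∇g⁺ vanishes at G, G₀ and G⁻, and ∇g⁺(G⁺) = (3/d)·i⊥; while ∇g⁻ vanishes at G, G₀ and G⁺, and ∇g⁻(G⁻) = (3/d)·i⊥. -/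
private lemma cubic_deriv (d q t : ℝ) :
    HasDerivAt (fun t : ℝ => 8 * (t / d) ^ 3 + q * (t / d) ^ 2)
      ((24 * (t / d) ^ 2 + 2 * q * (t / d)) / d) t := by
  have h1 : HasDerivAt (fun t : ℝ => t / d) (1 / d) t := (hasDerivAt_id t).div_const d
  have h := ((h1.pow 3).const_mul (8:ℝ)).add ((h1.pow 2).const_mul q)
  convert h using 1
  · rfl
  · rfl
  · rfl
  · norm_num; ring

/-- Lemma 5.1: the gradients of the two cubics `g⁺ = ι⁺(μ/d)` and `g⁻ = ι⁻(μ/d)` vanish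
at three of the four interior 16-Lyness quadrature points of the triangle `V V⁺ V⁻`,
and equal `(3/d) i⊥` at the remaining one.  Here `i = (G − V)/‖G − V‖` (Euclidean
norm), `i⊥ = (−i.2, i.1)`, `μ x = i⊥ ⬝ (x − G)`, `d = μ(V⁺) > 0`. -/
theorem gradients_of_interior_basis_cubics (V Vp Vm : ℝ × ℝ)
    (hindep : AffineIndependent ℝ ![V, Vp, Vm])
    (G : ℝ × ℝ) (hG : G = (1/3 : ℝ) • (V + Vp + Vm))
    (i : ℝ × ℝ)
    (hi : i = (1 / Real.sqrt ((G.1 - V.1) ^ 2 + (G.2 - V.2) ^ 2)) • (G - V))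
    (μ : ℝ × ℝ → ℝ) (hμ : ∀ x, μ x = (-i.2) * (x.1 - G.1) + i.1 * (x.2 - G.2))
    (d : ℝ) (hd : d = μ Vp) (hdpos : 0 < d)
    (gp gm : ℝ × ℝ → ℝ)
    (hgp : ∀ x, gp x = 8 * (μ x / d) ^ 3 + 3 * (μ x / d) ^ 2)
    (hgm : ∀ x, gm x = 8 * (μ x / d) ^ 3 - 3 * (μ x / d) ^ 2)
    (G₀ Gp Gm : ℝ × ℝ)
    (hG₀ : G₀ = (1/2 : ℝ) • V + (1/4 : ℝ) • Vp + (1/4 : ℝ) • Vm)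
    (hGp : Gp = (1/4 : ℝ) • V + (1/2 : ℝ) • Vp + (1/4 : ℝ) • Vm)
    (hGm : Gm = (1/4 : ℝ) • V + (1/4 : ℝ) • Vp + (1/2 : ℝ) • Vm) :
    fderiv ℝ gp G = 0 ∧ fderiv ℝ gp G₀ = 0 ∧ fderiv ℝ gp Gm = 0 ∧
    (∀ w : ℝ × ℝ, fderiv ℝ gp Gp w = (3 / d) * ((-i.2) * w.1 + i.1 * w.2)) ∧
    fderiv ℝ gm G = 0 ∧ fderiv ℝ gm G₀ = 0 ∧ fderiv ℝ gm Gp = 0 ∧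
    (∀ w : ℝ × ℝ, fderiv ℝ gm Gm w = (3 / d) * ((-i.2) * w.1 + i.1 * w.2)) := by
  have hdne : d ≠ 0 := ne_of_gt hdpos
  -- component facts
  have hG1 : G.1 = (V.1 + Vp.1 + Vm.1) / 3 := by rw [hG]; simp; ring
  have hG2 : G.2 = (V.2 + Vp.2 + Vm.2) / 3 := by rw [hG]; simp; ring
  have hG₀1 : G₀.1 = V.1/2 + Vp.1/4 + Vm.1/4 := by rw [hG₀]; simp; ring
  have hG₀2 : G₀.2 = V.2/2 + Vp.2/4 + Vm.2/4 := by rw [hG₀]; simp; ring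
  have hGp1 : Gp.1 = V.1/4 + Vp.1/2 + Vm.1/4 := by rw [hGp]; simp; ring
  have hGp2 : Gp.2 = V.2/4 + Vp.2/2 + Vm.2/4 := by rw [hGp]; simp; ring
  have hGm1 : Gm.1 = V.1/4 + Vp.1/4 + Vm.1/2 := by rw [hGm]; simp; ring
  have hGm2 : Gm.2 = V.2/4 + Vp.2/4 + Vm.2/2 := by rw [hGm]; simp; ring
  set s : ℝ := 1 / Real.sqrt ((G.1 - V.1) ^ 2 + (G.2 - V.2) ^ 2) with hs
  have hi1 : i.1 = s * (G.1 - V.1) := by rw [hi]; simp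
  have hi2 : i.2 = s * (G.2 - V.2) := by rw [hi]; simp
  -- values of μ at the relevant points
  have hμV : μ V = 0 := by rw [hμ, hi1, hi2]; ring
  have hμG : μ G = 0 := by rw [hμ]; ring
  have hdVp : d = (-i.2) * (Vp.1 - G.1) + i.1 * (Vp.2 - G.2) := by rw [hd, hμ]
  have hμV' : (-i.2) * (V.1 - G.1) + i.1 * (V.2 - G.2) = 0 := by rw [← hμ V, hμV]
  have hμVm : μ Vm = -d := by
    rw [hμ]
    linear_combination -hμV' + hdVp + 3 * i.2 * hG1 - 3 * i.1 * hG2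
  have hVmE : (-i.2) * (Vm.1 - G.1) + i.1 * (Vm.2 - G.2) = -d := by rw [← hμ Vm]; exact hμVm
  have hμG₀ : μ G₀ = 0 := by
    rw [hμ]
    linear_combination -i.2 * hG₀1 + i.1 * hG₀2 + (1/2) * hμV' - (1/4) * hdVp + (1/4) * hVmE
  have hμGp : μ Gp = d / 4 := by
    rw [hμ]
    linear_combination -i.2 * hGp1 + i.1 * hGp2 + (1/4) * hμV' - (1/2) * hdVp + (1/4) * hVmE
  have hμGm : μ Gm = -(d / 4) := by
    rw [hμ]
    linear_combination -i.2 * hGm1 + i.1 * hGm2 + (1/4) * hμV' - (1/4) * hdVp + (1/2) * hVmE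
  -- the derivative of μ
  set L : (ℝ × ℝ) →L[ℝ] ℝ :=
    (-i.2) • ContinuousLinearMap.fst ℝ ℝ ℝ + i.1 • ContinuousLinearMap.snd ℝ ℝ ℝ with hL
  have hμderiv : ∀ x : ℝ × ℝ, HasFDerivAt μ L x := by
    intro x
    have h : HasFDerivAt (fun x : ℝ × ℝ => (-i.2) * (x.1 - G.1) + i.1 * (x.2 - G.2)) L x := by
      exact ((hasFDerivAt_fst.sub_const G.1).const_mul (-i.2)).add
        ((hasFDerivAt_snd.sub_const G.2).const_mul i.1)
    have : μ = fun x : ℝ × ℝ => (-i.2) * (x.1 - G.1) + i.1 * (x.2 - G.2) := funext hμ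
    rw [this]; exact h
  -- general gradient formula
  have key : ∀ (q : ℝ) (g : ℝ × ℝ → ℝ), (∀ x, g x = 8 * (μ x / d) ^ 3 + q * (μ x / d) ^ 2) →
      ∀ x : ℝ × ℝ, fderiv ℝ g x = ((24 * (μ x / d) ^ 2 + 2 * q * (μ x / d)) / d) • L := by
    intro q g hg x
    have hcomp := (cubic_deriv d q (μ x)).comp_hasFDerivAt x (hμderiv x)
    have hgeq : g = (fun t : ℝ => 8 * (t / d) ^ 3 + q * (t / d) ^ 2) ∘ μ := funext hg
    rw [hgeq]
    exact hcomp.fderiv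
  have hLw : ∀ w : ℝ × ℝ, L w = (-i.2) * w.1 + i.1 * w.2 := by
    intro w; simp [hL]
  -- evaluate the scalar factor at each point
  have e1 : fderiv ℝ gp G = 0 := by rw [key 3 gp hgp G, hμG]; norm_num
  have e2 : fderiv ℝ gp G₀ = 0 := by rw [key 3 gp hgp G₀, hμG₀]; norm_num
  have e3 : fderiv ℝ gp Gm = 0 := by
    rw [key 3 gp hgp Gm, hμGm]
    have : (24 * (-(d / 4) / d) ^ 2 + 2 * 3 * (-(d / 4) / d)) / d = 0 := by
      field_simp; ring
    rw [this, zero_smul]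
  have e4 : ∀ w : ℝ × ℝ, fderiv ℝ gp Gp w = (3 / d) * ((-i.2) * w.1 + i.1 * w.2) := by
    intro w
    rw [key 3 gp hgp Gp, hμGp]
    have : (24 * (d / 4 / d) ^ 2 + 2 * 3 * (d / 4 / d)) / d = 3 / d := by
      field_simp; ring
    rw [this, ContinuousLinearMap.smul_apply, hLw w]; rfl
  have hgm' : ∀ x, gm x = 8 * (μ x / d) ^ 3 + (-3) * (μ x / d) ^ 2 := by
    intro x; rw [hgm x]; ring
  have e5 : fderiv ℝ gm G = 0 := by rw [key (-3) gm hgm' G, hμG]; norm_num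
  have e6 : fderiv ℝ gm G₀ = 0 := by rw [key (-3) gm hgm' G₀, hμG₀]; norm_num
  have e7 : fderiv ℝ gm Gp = 0 := by
    rw [key (-3) gm hgm' Gp, hμGp]
    have : (24 * (d / 4 / d) ^ 2 + 2 * (-3) * (d / 4 / d)) / d = 0 := by
      field_simp; ring
    rw [this, zero_smul]
  have e8 : ∀ w : ℝ × ℝ, fderiv ℝ gm Gm w = (3 / d) * ((-i.2) * w.1 + i.1 * w.2) := by
    intro w
    rw [key (-3) gm hgm' Gm, hμGm]
    have : (24 * (-(d / 4) / d) ^ 2 + 2 * (-3) * (-(d / 4) / d)) / d = 3 / d := by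
      field_simp; ring
    rw [this, ContinuousLinearMap.smul_apply, hLw w]; rfl
  exact ⟨e1, e2, e3, e4, e5, e6, e7, e8⟩
end

section
/- Let V₁, V₂, V₃ ∈ ℝ² be affinely independent, K = convexHull{V₁, V₂, V₃}, and for i ∈ {1,2,3} let G_i = ½V_i + ¼V_j + ¼V_k where {j, k} = {1,2,3}∖{i}. Then there exists exactly one polynomial v : ℝ² → ℝ of total degree at most 4 that vanishes identically on all three edges [V₁,V₂], [V₂,V₃], [V₃,V₁] of K and satisfies v(G₁) = 0, v(G₂) = 0, v(G₃) = 1. -/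
open MvPolynomial

section Auxiliary

/-! ### Auxiliary lemmas for the quartic bubble theorem -/

lemma quartic_bubble_eval_eval₂_poly (w : MvPolynomial (Fin 2) ℝ) (g : Fin 2 → Polynomial ℝ)
    (t : ℝ) :
    Polynomial.eval t (MvPolynomial.eval₂ Polynomial.C g w) =
      MvPolynomial.eval (fun i => Polynomial.eval t (g i)) w := by
  have h := MvPolynomial.eval₂_comp_left (Polynomial.evalRingHom t) Polynomial.C g w
  simp only [Polynomial.coe_evalRingHom] at h
  rw [h]
  have : (Polynomial.evalRingHom t).comp Polynomial.C = RingHom.id ℝ := by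
    ext x; simp
  rw [this]
  rfl

/-- vanishing on a segment extends to the whole line -/
lemma quartic_bubble_seg_to_line (w : MvPolynomial (Fin 2) ℝ) (A B : ℝ × ℝ)
    (h : ∀ p ∈ segment ℝ A B, MvPolynomial.eval ![p.1, p.2] w = 0) :
    ∀ t : ℝ, MvPolynomial.eval ![A.1 + t * (B.1 - A.1), A.2 + t * (B.2 - A.2)] w = 0 := by
  set g : Fin 2 → Polynomial ℝ :=
    ![Polynomial.C A.1 + Polynomial.C (B.1 - A.1) * Polynomial.X,
      Polynomial.C A.2 + Polynomial.C (B.2 - A.2) * Polynomial.X] with hg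
  set P : Polynomial ℝ := MvPolynomial.eval₂ Polynomial.C g w with hP
  have hPt : ∀ t : ℝ, P.eval t
      = MvPolynomial.eval ![A.1 + t * (B.1 - A.1), A.2 + t * (B.2 - A.2)] w := by
    intro t
    rw [hP, quartic_bubble_eval_eval₂_poly]
    have hfun : (fun i => Polynomial.eval t (g i))
        = ![A.1 + t * (B.1 - A.1), A.2 + t * (B.2 - A.2)] := by
      funext i
      fin_cases i <;> simp [hg] <;> ring
    rw [hfun]
  have hP0 : P = 0 := by
    apply Polynomial.eq_zero_of_infinite_isRoot
    apply Set.Infinite.mono (s := Set.Icc (0:ℝ) 1)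
    · intro t ht
      simp only [Set.mem_setOf_eq, Polynomial.IsRoot, hPt]
      have hmem : ((A.1 + t * (B.1 - A.1), A.2 + t * (B.2 - A.2)) : ℝ × ℝ) ∈ segment ℝ A B := by
        refine ⟨1 - t, t, by linarith [ht.1, ht.2], ht.1, by ring, ?_⟩
        simp only [Prod.ext_iff, Prod.fst_add, Prod.snd_add, Prod.smul_fst, Prod.smul_snd,
          smul_eq_mul]
        constructor <;> ring
      have := h _ hmem
      simpa using this
    · exact Set.Icc_infinite (by norm_num)
  intro t
  rw [← hPt, hP0, Polynomial.eval_zero]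

lemma quartic_bubble_totalDegree_aeval_le (f : Fin 2 → MvPolynomial (Fin 2) ℝ)
    (hf : ∀ i, (f i).totalDegree ≤ 1) (w : MvPolynomial (Fin 2) ℝ) :
    (MvPolynomial.aeval f w).totalDegree ≤ w.totalDegree := by
  conv_lhs => rw [w.as_sum]
  rw [map_sum]
  apply (MvPolynomial.totalDegree_finset_sum _ _).trans
  apply Finset.sup_le
  intro d hd
  rw [MvPolynomial.aeval_monomial]
  apply (MvPolynomial.totalDegree_mul _ _).trans
  have h1 : (algebraMap ℝ (MvPolynomial (Fin 2) ℝ) (MvPolynomial.coeff d w)).totalDegree = 0 :=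
    MvPolynomial.totalDegree_C _
  rw [h1, zero_add]
  have h2 : (d.prod fun i k => f i ^ k).totalDegree ≤ d.sum fun _ k => k := by
    rw [Finsupp.prod]
    apply (MvPolynomial.totalDegree_finset_prod _ _).trans
    rw [Finsupp.sum]
    apply Finset.sum_le_sum
    intro i _
    apply (MvPolynomial.totalDegree_pow _ _).trans
    calc d i * (f i).totalDegree ≤ d i * 1 := Nat.mul_le_mul_left _ (hf i)
      _ = d i := by ring
  exact h2.trans (MvPolynomial.le_totalDegree hd)

lemma quartic_bubble_eval_aeval_mv (w : MvPolynomial (Fin 2) ℝ)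
    (g : Fin 2 → MvPolynomial (Fin 2) ℝ) (v : Fin 2 → ℝ) :
    MvPolynomial.eval v (MvPolynomial.aeval g w)
      = MvPolynomial.eval (fun i => MvPolynomial.eval v (g i)) w := by
  rw [MvPolynomial.aeval_def, MvPolynomial.algebraMap_eq]
  have h := MvPolynomial.eval₂_comp_left (MvPolynomial.eval v) MvPolynomial.C g w
  rw [h]
  have : (MvPolynomial.eval v).comp (MvPolynomial.C : ℝ →+* MvPolynomial (Fin 2) ℝ)
      = RingHom.id ℝ := by
    ext x; simp
  rw [this]
  rfl

lemma quartic_bubble_single_add_single_eq_iff (i j m n : ℕ) :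
    (Finsupp.single (0:Fin 2) i + Finsupp.single 1 j
      = Finsupp.single 0 m + Finsupp.single 1 n) ↔ (i = m ∧ j = n) := by
  constructor
  · intro h
    constructor
    · have := DFunLike.congr_fun h 0
      simpa using this
    · have := DFunLike.congr_fun h 1
      simpa using this
  · rintro ⟨rfl, rfl⟩; rfl

lemma quartic_bubble_coeff_term (a : ℝ) (i j m n : ℕ) :
    MvPolynomial.coeff (Finsupp.single (0:Fin 2) m + Finsupp.single 1 n)
      (MvPolynomial.C a * X 0 ^ i * X 1 ^ j) = if i = m ∧ j = n then a else 0 := by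
  rw [MvPolynomial.X_pow_eq_monomial, MvPolynomial.X_pow_eq_monomial, MvPolynomial.C_apply,
    MvPolynomial.monomial_mul, MvPolynomial.monomial_mul, MvPolynomial.coeff_monomial]
  simp only [zero_add, mul_one, quartic_bubble_single_add_single_eq_iff]

lemma quartic_bubble_sum_support_fin2 (d : Fin 2 →₀ ℕ) :
    ∑ i ∈ d.support, d i = d 0 + d 1 := by
  rw [← Fin.sum_univ_two (fun i => d i)]
  apply Finset.sum_subset (Finset.subset_univ _)
  intro i _ hi
  simpa using hi

lemma quartic_bubble_fin2_finsupp_rep (d : Fin 2 →₀ ℕ) :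
    d = Finsupp.single 0 (d 0) + Finsupp.single 1 (d 1) := by
  ext i
  fin_cases i <;> simp [Finsupp.single_apply]

/-- representation of a bivariate polynomial of total degree ≤ 4 -/
lemma quartic_bubble_rep4 (w : MvPolynomial (Fin 2) ℝ) (h4 : w.totalDegree ≤ 4)
    (a : ℕ → ℕ → ℝ)
    (ha : ∀ i j, a i j = MvPolynomial.coeff (Finsupp.single 0 i + Finsupp.single 1 j) w) :
    w = C (a 0 0) * X 0 ^ 0 * X 1 ^ 0 + C (a 1 0) * X 0 ^ 1 * X 1 ^ 0
      + C (a 2 0) * X 0 ^ 2 * X 1 ^ 0 + C (a 3 0) * X 0 ^ 3 * X 1 ^ 0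
      + C (a 4 0) * X 0 ^ 4 * X 1 ^ 0
      + C (a 0 1) * X 0 ^ 0 * X 1 ^ 1 + C (a 1 1) * X 0 ^ 1 * X 1 ^ 1
      + C (a 2 1) * X 0 ^ 2 * X 1 ^ 1 + C (a 3 1) * X 0 ^ 3 * X 1 ^ 1
      + C (a 0 2) * X 0 ^ 0 * X 1 ^ 2 + C (a 1 2) * X 0 ^ 1 * X 1 ^ 2
      + C (a 2 2) * X 0 ^ 2 * X 1 ^ 2
      + C (a 0 3) * X 0 ^ 0 * X 1 ^ 3 + C (a 1 3) * X 0 ^ 1 * X 1 ^ 3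
      + C (a 0 4) * X 0 ^ 0 * X 1 ^ 4 := by
  ext d
  rw [quartic_bubble_fin2_finsupp_rep d]
  set m := d 0 with hm
  set n := d 1 with hn
  clear_value m n
  simp only [MvPolynomial.coeff_add, quartic_bubble_coeff_term, ha]
  by_cases h : m + n ≤ 4
  · have hm4 : m ≤ 4 := by omega
    have hn4 : n ≤ 4 := by omega
    interval_cases m <;> interval_cases n <;> simp <;> omega
  · have h0 : MvPolynomial.coeff (Finsupp.single (0:Fin 2) m + Finsupp.single 1 n) w = 0 := by
      apply MvPolynomial.coeff_eq_zero_of_totalDegree_lt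
      rw [quartic_bubble_sum_support_fin2]
      simp [Finsupp.single_apply]
      omega
    rw [h0]
    have : ∀ i j : ℕ, i + j ≤ 4 → ¬(i = m ∧ j = n) := by
      rintro i j hij ⟨rfl, rfl⟩; omega
    rw [if_neg (this 0 0 (by norm_num)), if_neg (this 1 0 (by norm_num)),
      if_neg (this 2 0 (by norm_num)), if_neg (this 3 0 (by norm_num)),
      if_neg (this 4 0 (by norm_num)), if_neg (this 0 1 (by norm_num)),
      if_neg (this 1 1 (by norm_num)), if_neg (this 2 1 (by norm_num)),
      if_neg (this 3 1 (by norm_num)), if_neg (this 0 2 (by norm_num)),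
      if_neg (this 1 2 (by norm_num)), if_neg (this 2 2 (by norm_num)),
      if_neg (this 0 3 (by norm_num)), if_neg (this 1 3 (by norm_num)),
      if_neg (this 0 4 (by norm_num))]
    norm_num

set_option maxHeartbeats 2000000 in
/-- uniqueness on the reference triangle -/
lemma quartic_bubble_ref_unique (w : MvPolynomial (Fin 2) ℝ) (h4 : w.totalDegree ≤ 4)
    (hA : ∀ t : ℝ, MvPolynomial.eval ![t, 0] w = 0)
    (hB : ∀ t : ℝ, MvPolynomial.eval ![0, t] w = 0)
    (hC : ∀ t : ℝ, MvPolynomial.eval ![1 - t, t] w = 0)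
    (hG1 : MvPolynomial.eval ![1/4, 1/4] w = 0)
    (hG2 : MvPolynomial.eval ![1/2, 1/4] w = 0)
    (hG3 : MvPolynomial.eval ![1/4, 1/2] w = 0) : w = 0 := by
  set a : ℕ → ℕ → ℝ := fun i j =>
    MvPolynomial.coeff (Finsupp.single 0 i + Finsupp.single 1 j) w with ha
  have hw := quartic_bubble_rep4 w h4 a (fun i j => rfl)
  have hE : ∀ x y : ℝ, MvPolynomial.eval ![x, y] w =
      a 0 0 + a 1 0 * x ^ 1 + a 2 0 * x ^ 2 + a 3 0 * x ^ 3 + a 4 0 * x ^ 4 + a 0 1 * y ^ 1 + a 1 1 * x ^ 1 * y ^ 1 + a 2 1 * x ^ 2 * y ^ 1 + a 3 1 * x ^ 3 * y ^ 1 + a 0 2 * y ^ 2 + a 1 2 * x ^ 1 * y ^ 2 + a 2 2 * x ^ 2 * y ^ 2 + a 0 3 * y ^ 3 + a 1 3 * x ^ 1 * y ^ 3 + a 0 4 * y ^ 4 := by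
    intro x y
    conv_lhs => rw [hw]
    simp only [map_add, map_mul, map_pow, MvPolynomial.eval_C, MvPolynomial.eval_X,
      Matrix.cons_val_zero, Matrix.cons_val_one, Matrix.head_cons]
    ring
  have qA0 := hA 0; have qA1 := hA 1; have qA2 := hA 2; have qA3 := hA 3; have qA4 := hA 4
  have qB1 := hB 1; have qB2 := hB 2; have qB3 := hB 3; have qB4 := hB 4
  have qC2 := hC 2; have qC3 := hC 3; have qC4 := hC 4; have qC5 := hC 5; have qC6 := hC 6
  rw [hE] at qA0 qA1 qA2 qA3 qA4 qB1 qB2 qB3 qB4 hG1 hG2 hG3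
  rw [show (1:ℝ) - 2 = -1 by norm_num] at qC2
  rw [show (1:ℝ) - 3 = -2 by norm_num] at qC3
  rw [show (1:ℝ) - 4 = -3 by norm_num] at qC4
  rw [show (1:ℝ) - 5 = -4 by norm_num] at qC5
  rw [show (1:ℝ) - 6 = -5 by norm_num] at qC6
  rw [hE] at qC2 qC3 qC4 qC5 qC6
  norm_num at qA0 qA1 qA2 qA3
  norm_num at qA4 qB1 qB2 qB3
  norm_num at qB4 qC2 qC3 qC4
  norm_num at qC5 qC6 hG1 hG2 hG3
  have z00 : a 0 0 = 0 := by linarith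
  have z10 : a 1 0 = 0 := by linarith
  have z20 : a 2 0 = 0 := by linarith
  have z30 : a 3 0 = 0 := by linarith
  have z40 : a 4 0 = 0 := by linarith
  have z01 : a 0 1 = 0 := by linarith
  have z02 : a 0 2 = 0 := by linarith
  have z03 : a 0 3 = 0 := by linarith
  have z04 : a 0 4 = 0 := by linarith
  have z11 : a 1 1 = 0 := by linarith
  have z21 : a 2 1 = 0 := by linarith
  have z31 : a 3 1 = 0 := by linarith
  have z12 : a 1 2 = 0 := by linarith
  have z22 : a 2 2 = 0 := by linarith
  have z13 : a 1 3 = 0 := by linarith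
  rw [hw, z00, z10, z20, z30, z40, z01, z02, z03, z04, z11, z21, z31, z12, z22, z13]
  simp

set_option linter.unusedTactic false in
set_option linter.unreachableTactic false in
lemma quartic_bubble_det_ne_zero (V₁ V₂ V₃ : ℝ × ℝ)
    (h : AffineIndependent ℝ ![V₁, V₂, V₃]) :
    (V₂.1 - V₁.1) * (V₃.2 - V₁.2) - (V₂.2 - V₁.2) * (V₃.1 - V₁.1) ≠ 0 := by
  intro hD0
  rw [affineIndependent_iff] at h
  by_cases h1 : V₃.2 - V₁.2 = 0 ∧ V₂.2 - V₁.2 = 0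
  · by_cases h2 : V₃.1 - V₁.1 = 0 ∧ V₂.1 - V₁.1 = 0
    · have := h Finset.univ ![1, -1, 0] (by simp [Fin.sum_univ_three]) (by
        simp only [Fin.sum_univ_three, Matrix.cons_val_zero, Matrix.cons_val_one,
          Matrix.head_cons, Matrix.cons_val_two, Matrix.tail_cons]
        have e1 : V₂.1 = V₁.1 := by linarith [h2.2]
        have e2 : V₂.2 = V₁.2 := by linarith [h1.2]
        apply Prod.ext <;>
          simp [Prod.fst_add, Prod.snd_add, Prod.smul_fst, Prod.smul_snd, e1, e2] <;> ring)
        0 (Finset.mem_univ _)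
      norm_num at this
    · set a₂ := V₃.1 - V₁.1
      set a₃ := -(V₂.1 - V₁.1)
      have := h Finset.univ ![-(a₂ + a₃), a₂, a₃] (by simp [Fin.sum_univ_three]) (by
        simp only [Fin.sum_univ_three, Matrix.cons_val_zero, Matrix.cons_val_one,
          Matrix.head_cons, Matrix.cons_val_two, Matrix.tail_cons]
        refine Prod.ext ?_ ?_ <;>
          simp only [Prod.fst_add, Prod.snd_add, Prod.smul_fst, Prod.smul_snd, smul_eq_mul,
            Prod.fst_zero, Prod.snd_zero, a₂, a₃]
        · ring
        · linear_combination (V₃.1 - V₁.1) * h1.2 - (V₂.1 - V₁.1) * h1.1)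
      have e2 := this 1 (Finset.mem_univ _)
      have e3 := this 2 (Finset.mem_univ _)
      simp only [Matrix.cons_val_one, Matrix.head_cons, Matrix.cons_val_two,
        Matrix.tail_cons, a₂, a₃] at e2 e3
      exact h2 ⟨e2, by linarith⟩
  · set a₂ := V₃.2 - V₁.2
    set a₃ := -(V₂.2 - V₁.2)
    have := h Finset.univ ![-(a₂ + a₃), a₂, a₃] (by simp [Fin.sum_univ_three]) (by
      simp only [Fin.sum_univ_three, Matrix.cons_val_zero, Matrix.cons_val_one,
        Matrix.head_cons, Matrix.cons_val_two, Matrix.tail_cons]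
      refine Prod.ext ?_ ?_ <;>
        simp only [Prod.fst_add, Prod.snd_add, Prod.smul_fst, Prod.smul_snd, smul_eq_mul,
          Prod.fst_zero, Prod.snd_zero, a₂, a₃]
      · linear_combination hD0
      · ring)
    have e2 := this 1 (Finset.mem_univ _)
    have e3 := this 2 (Finset.mem_univ _)
    simp only [Matrix.cons_val_one, Matrix.head_cons, Matrix.cons_val_two,
      Matrix.tail_cons, a₂, a₃] at e2 e3
    exact h1 ⟨e2, by linarith⟩

lemma quartic_bubble_deg_lin (a : ℝ) (i : Fin 2) (b : ℝ) :
    (MvPolynomial.C a * (X i - MvPolynomial.C b) : MvPolynomial (Fin 2) ℝ).totalDegree ≤ 1 := by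
  refine (MvPolynomial.totalDegree_mul _ _).trans ?_
  rw [MvPolynomial.totalDegree_C, zero_add]
  refine (MvPolynomial.totalDegree_sub _ _).trans ?_
  rw [MvPolynomial.totalDegree_X, MvPolynomial.totalDegree_C]
  simp

end Auxiliary


set_option maxHeartbeats 8000000 in
/-- The quartic bubble test function used in the proofs of Lemmas 5.3 and 6.1: there is
exactly one polynomial of total degree at most 4 vanishing on the three edges of the
triangle `V₁ V₂ V₃` with prescribed values `0, 0, 1` at the three interior Lyness
points `G₁, G₂, G₃`. -/
theorem exists_unique_quartic_bubble (V₁ V₂ V₃ : ℝ × ℝ)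
    (hindep : AffineIndependent ℝ ![V₁, V₂, V₃])
    (G₁ G₂ G₃ : ℝ × ℝ)
    (hG₁ : G₁ = (1/2 : ℝ) • V₁ + (1/4 : ℝ) • V₂ + (1/4 : ℝ) • V₃)
    (hG₂ : G₂ = (1/4 : ℝ) • V₁ + (1/2 : ℝ) • V₂ + (1/4 : ℝ) • V₃)
    (hG₃ : G₃ = (1/4 : ℝ) • V₁ + (1/4 : ℝ) • V₂ + (1/2 : ℝ) • V₃) :
    ∃! v : MvPolynomial (Fin 2) ℝ,
      v.totalDegree ≤ 4 ∧
      (∀ x ∈ segment ℝ V₁ V₂, MvPolynomial.eval ![x.1, x.2] v = 0) ∧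
      (∀ x ∈ segment ℝ V₂ V₃, MvPolynomial.eval ![x.1, x.2] v = 0) ∧
      (∀ x ∈ segment ℝ V₃ V₁, MvPolynomial.eval ![x.1, x.2] v = 0) ∧
      MvPolynomial.eval ![G₁.1, G₁.2] v = 0 ∧
      MvPolynomial.eval ![G₂.1, G₂.2] v = 0 ∧
      MvPolynomial.eval ![G₃.1, G₃.2] v = 1 := by
  have hD : ((V₂.1 - V₁.1) * (V₃.2 - V₁.2) - (V₂.2 - V₁.2) * (V₃.1 - V₁.1)) ≠ 0 := quartic_bubble_det_ne_zero V₁ V₂ V₃ hindep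
  -- the affine forms (unnormalized barycentric coordinates)
  set m₂ : MvPolynomial (Fin 2) ℝ :=
    C (V₃.2 - V₁.2) * (X 0 - C V₁.1) - C (V₃.1 - V₁.1) * (X 1 - C V₁.2) with hm₂def
  set m₃ : MvPolynomial (Fin 2) ℝ :=
    C (V₂.1 - V₁.1) * (X 1 - C V₁.2) - C (V₂.2 - V₁.2) * (X 0 - C V₁.1) with hm₃def
  set m₁ : MvPolynomial (Fin 2) ℝ := C ((V₂.1 - V₁.1) * (V₃.2 - V₁.2) - (V₂.2 - V₁.2) * (V₃.1 - V₁.1)) - m₂ - m₃ with hm₁def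
  set v : MvPolynomial (Fin 2) ℝ :=
    C (128 / ((V₂.1 - V₁.1) * (V₃.2 - V₁.2) - (V₂.2 - V₁.2) * (V₃.1 - V₁.1)) ^ 4) * (m₁ * (m₂ * (m₃ * (m₃ - C (((V₂.1 - V₁.1) * (V₃.2 - V₁.2) - (V₂.2 - V₁.2) * (V₃.1 - V₁.1)) / 4))))) with hvdef
  -- evaluation formula
  have heval : ∀ x y : ℝ, MvPolynomial.eval ![x, y] v = (128 / ((V₂.1 - V₁.1) * (V₃.2 - V₁.2) - (V₂.2 - V₁.2) * (V₃.1 - V₁.1)) ^ 4) * ((((V₂.1 - V₁.1) * (V₃.2 - V₁.2) - (V₂.2 - V₁.2) * (V₃.1 - V₁.1)) - ((V₃.2 - V₁.2) * (x - V₁.1) - (V₃.1 - V₁.1) * (y - V₁.2)) - ((V₂.1 - V₁.1) * (y - V₁.2) - (V₂.2 - V₁.2) * (x - V₁.1))) * (((V₃.2 - V₁.2) * (x - V₁.1) - (V₃.1 - V₁.1) * (y - V₁.2)) * (((V₂.1 - V₁.1) * (y - V₁.2) - (V₂.2 - V₁.2) * (x - V₁.1)) * (((V₂.1 - V₁.1)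 * (y - V₁.2) - (V₂.2 - V₁.2) * (x - V₁.1)) - ((V₂.1 - V₁.1) * (V₃.2 - V₁.2) - (V₂.2 - V₁.2) * (V₃.1 - V₁.1)) / 4)))) := by
    intro x y
    rw [hvdef, hm₁def, hm₂def, hm₃def]
    simp only [map_mul, map_sub, map_add, MvPolynomial.eval_C, MvPolynomial.eval_X,
      Matrix.cons_val_zero, Matrix.cons_val_one, Matrix.head_cons]
    try ring
  -- coordinates of the Lyness points
  have hg1 : G₁.1 = (1/2) * V₁.1 + (1/4) * V₂.1 + (1/4) * V₃.1
      ∧ G₁.2 = (1/2) * V₁.2 + (1/4) * V₂.2 + (1/4) * V₃.2 := by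
    rw [hG₁]
    constructor <;>
      simp only [Prod.fst_add, Prod.snd_add, Prod.smul_fst, Prod.smul_snd, smul_eq_mul]
  have hg2 : G₂.1 = (1/4) * V₁.1 + (1/2) * V₂.1 + (1/4) * V₃.1
      ∧ G₂.2 = (1/4) * V₁.2 + (1/2) * V₂.2 + (1/4) * V₃.2 := by
    rw [hG₂]
    constructor <;>
      simp only [Prod.fst_add, Prod.snd_add, Prod.smul_fst, Prod.smul_snd, smul_eq_mul]
  have hg3 : G₃.1 = (1/4) * V₁.1 + (1/4) * V₂.1 + (1/2) * V₃.1
      ∧ G₃.2 = (1/4) * V₁.2 + (1/4) * V₂.2 + (1/2) * V₃.2 := by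
    rw [hG₃]
    constructor <;>
      simp only [Prod.fst_add, Prod.snd_add, Prod.smul_fst, Prod.smul_snd, smul_eq_mul]
  -- properties of v
  have hvdeg : v.totalDegree ≤ 4 := by
    have hm2d : m₂.totalDegree ≤ 1 := by
      rw [hm₂def]
      exact (MvPolynomial.totalDegree_sub _ _).trans
        (max_le (quartic_bubble_deg_lin _ _ _) (quartic_bubble_deg_lin _ _ _))
    have hm3d : m₃.totalDegree ≤ 1 := by
      rw [hm₃def]
      exact (MvPolynomial.totalDegree_sub _ _).trans
        (max_le (quartic_bubble_deg_lin _ _ _) (quartic_bubble_deg_lin _ _ _))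
    have hm1d : m₁.totalDegree ≤ 1 := by
      rw [hm₁def]
      refine (MvPolynomial.totalDegree_sub _ _).trans (max_le ?_ hm3d)
      refine (MvPolynomial.totalDegree_sub _ _).trans (max_le ?_ hm2d)
      rw [MvPolynomial.totalDegree_C]
      omega
    have hm3d' : (m₃ - C (((V₂.1 - V₁.1) * (V₃.2 - V₁.2) - (V₂.2 - V₁.2) * (V₃.1 - V₁.1)) / 4)).totalDegree ≤ 1 := by
      refine (MvPolynomial.totalDegree_sub _ _).trans (max_le hm3d ?_)
      rw [MvPolynomial.totalDegree_C]
      omega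
    rw [hvdef]
    refine (MvPolynomial.totalDegree_mul _ _).trans ?_
    rw [MvPolynomial.totalDegree_C, zero_add]
    refine (MvPolynomial.totalDegree_mul _ _).trans ?_
    refine le_trans (add_le_add hm1d ((MvPolynomial.totalDegree_mul _ _).trans
      (add_le_add hm2d ((MvPolynomial.totalDegree_mul _ _).trans
        (add_le_add hm3d hm3d'))))) ?_
    omega
  have hv12 : ∀ p ∈ segment ℝ V₁ V₂, MvPolynomial.eval ![p.1, p.2] v = 0 := by
    rintro p ⟨s, t, hs, ht, hst, rfl⟩
    rw [heval]
    simp only [Prod.fst_add, Prod.snd_add, Prod.smul_fst, Prod.smul_snd, smul_eq_mul]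
    obtain rfl : s = 1 - t := by linarith
    ring
  have hv23 : ∀ p ∈ segment ℝ V₂ V₃, MvPolynomial.eval ![p.1, p.2] v = 0 := by
    rintro p ⟨s, t, hs, ht, hst, rfl⟩
    rw [heval]
    simp only [Prod.fst_add, Prod.snd_add, Prod.smul_fst, Prod.smul_snd, smul_eq_mul]
    obtain rfl : s = 1 - t := by linarith
    ring
  have hv31 : ∀ p ∈ segment ℝ V₃ V₁, MvPolynomial.eval ![p.1, p.2] v = 0 := by
    rintro p ⟨s, t, hs, ht, hst, rfl⟩
    rw [heval]
    simp only [Prod.fst_add, Prod.snd_add, Prod.smul_fst, Prod.smul_snd, smul_eq_mul]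
    obtain rfl : s = 1 - t := by linarith
    ring
  have hvg1 : MvPolynomial.eval ![G₁.1, G₁.2] v = 0 := by
    rw [heval, hg1.1, hg1.2]
    ring
  have hvg2 : MvPolynomial.eval ![G₂.1, G₂.2] v = 0 := by
    rw [heval, hg2.1, hg2.2]
    ring
  have hvg3 : MvPolynomial.eval ![G₃.1, G₃.2] v = 1 := by
    rw [heval, hg3.1, hg3.2]
    field_simp
    ring
  refine ⟨v, ⟨hvdeg, hv12, hv23, hv31, hvg1, hvg2, hvg3⟩, ?_⟩
  -- uniqueness
  rintro u ⟨hu4, hu12, hu23, hu31, hug1, hug2, hug3⟩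
  set w : MvPolynomial (Fin 2) ℝ := u - v with hwdef
  have hw4 : w.totalDegree ≤ 4 :=
    (MvPolynomial.totalDegree_sub u v).trans (max_le hu4 hvdeg)
  have hw12 : ∀ p ∈ segment ℝ V₁ V₂, MvPolynomial.eval ![p.1, p.2] w = 0 := by
    intro p hp
    rw [hwdef, map_sub, hu12 p hp, hv12 p hp, sub_zero]
  have hw23 : ∀ p ∈ segment ℝ V₂ V₃, MvPolynomial.eval ![p.1, p.2] w = 0 := by
    intro p hp
    rw [hwdef, map_sub, hu23 p hp, hv23 p hp, sub_zero]
  have hw31 : ∀ p ∈ segment ℝ V₃ V₁, MvPolynomial.eval ![p.1, p.2] w = 0 := by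
    intro p hp
    rw [hwdef, map_sub, hu31 p hp, hv31 p hp, sub_zero]
  have hline12 := quartic_bubble_seg_to_line w V₁ V₂ hw12
  have hline23 := quartic_bubble_seg_to_line w V₂ V₃ hw23
  have hline31 := quartic_bubble_seg_to_line w V₃ V₁ hw31
  have hwg1 : MvPolynomial.eval ![G₁.1, G₁.2] w = 0 := by
    rw [hwdef, map_sub, hug1, hvg1, sub_zero]
  have hwg2 : MvPolynomial.eval ![G₂.1, G₂.2] w = 0 := by
    rw [hwdef, map_sub, hug2, hvg2, sub_zero]
  have hwg3 : MvPolynomial.eval ![G₃.1, G₃.2] w = 0 := by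
    rw [hwdef, map_sub, hug3, hvg3, sub_self]
  -- transport to the reference triangle
  set A₁ : MvPolynomial (Fin 2) ℝ :=
    C V₁.1 + C (V₂.1 - V₁.1) * X 0 + C (V₃.1 - V₁.1) * X 1 with hA₁def
  set A₂ : MvPolynomial (Fin 2) ℝ :=
    C V₁.2 + C (V₂.2 - V₁.2) * X 0 + C (V₃.2 - V₁.2) * X 1 with hA₂def
  set w' : MvPolynomial (Fin 2) ℝ := MvPolynomial.aeval ![A₁, A₂] w with hw'def
  have hdegA : ∀ i, ((![A₁, A₂] : Fin 2 → MvPolynomial (Fin 2) ℝ) i).totalDegree ≤ 1 := by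
    intro i
    have hterm : ∀ (c : ℝ) (k : Fin 2), (C c * X k : MvPolynomial (Fin 2) ℝ).totalDegree ≤ 1 := by
      intro c k
      refine (MvPolynomial.totalDegree_mul _ _).trans ?_
      rw [MvPolynomial.totalDegree_C, MvPolynomial.totalDegree_X]
    fin_cases i <;>
    · simp only [Matrix.cons_val_zero, Matrix.cons_val_one, Matrix.head_cons, hA₁def, hA₂def]
      refine (MvPolynomial.totalDegree_add _ _).trans (max_le ((MvPolynomial.totalDegree_add _ _).trans (max_le ?_ (hterm _ _))) (hterm _ _))
      rw [MvPolynomial.totalDegree_C]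
      omega
  have hw'4 : w'.totalDegree ≤ 4 := by
    rw [hw'def]
    exact (quartic_bubble_totalDegree_aeval_le _ hdegA w).trans hw4
  have hw'A : ∀ t : ℝ, MvPolynomial.eval ![t, 0] w' = 0 := by
    intro t
    rw [hw'def, quartic_bubble_eval_aeval_mv]
    have hfun : (fun i => MvPolynomial.eval ![t, 0] ((![A₁, A₂] : Fin 2 → MvPolynomial (Fin 2) ℝ) i))
        = ![V₁.1 + t * (V₂.1 - V₁.1), V₁.2 + t * (V₂.2 - V₁.2)] := by
      funext i
      fin_cases i <;> (simp [hA₁def, hA₂def]; try ring)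
    rw [hfun]
    exact hline12 t
  have hw'B : ∀ t : ℝ, MvPolynomial.eval ![0, t] w' = 0 := by
    intro t
    rw [hw'def, quartic_bubble_eval_aeval_mv]
    have hfun : (fun i => MvPolynomial.eval ![0, t] ((![A₁, A₂] : Fin 2 → MvPolynomial (Fin 2) ℝ) i))
        = ![V₃.1 + (1 - t) * (V₁.1 - V₃.1), V₃.2 + (1 - t) * (V₁.2 - V₃.2)] := by
      funext i
      fin_cases i <;> (simp [hA₁def, hA₂def]; try ring)
    rw [hfun]
    exact hline31 (1 - t)
  have hw'C : ∀ t : ℝ, MvPolynomial.eval ![1 - t, t] w' = 0 := by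
    intro t
    rw [hw'def, quartic_bubble_eval_aeval_mv]
    have hfun : (fun i => MvPolynomial.eval ![1 - t, t] ((![A₁, A₂] : Fin 2 → MvPolynomial (Fin 2) ℝ) i))
        = ![V₂.1 + t * (V₃.1 - V₂.1), V₂.2 + t * (V₃.2 - V₂.2)] := by
      funext i
      fin_cases i <;> (simp [hA₁def, hA₂def]; try ring)
    rw [hfun]
    exact hline23 t
  have hw'G1 : MvPolynomial.eval ![1/4, 1/4] w' = 0 := by
    rw [hw'def, quartic_bubble_eval_aeval_mv]
    have hfun : (fun i => MvPolynomial.eval ![1/4, 1/4] ((![A₁, A₂] : Fin 2 → MvPolynomial (Fin 2) ℝ) i))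
        = ![G₁.1, G₁.2] := by
      funext i
      fin_cases i <;> (simp [hA₁def, hA₂def, hg1.1, hg1.2]; try ring)
    rw [hfun]
    exact hwg1
  have hw'G2 : MvPolynomial.eval ![1/2, 1/4] w' = 0 := by
    rw [hw'def, quartic_bubble_eval_aeval_mv]
    have hfun : (fun i => MvPolynomial.eval ![1/2, 1/4] ((![A₁, A₂] : Fin 2 → MvPolynomial (Fin 2) ℝ) i))
        = ![G₂.1, G₂.2] := by
      funext i
      fin_cases i <;> (simp [hA₁def, hA₂def, hg2.1, hg2.2]; try ring)
    rw [hfun]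
    exact hwg2
  have hw'G3 : MvPolynomial.eval ![1/4, 1/2] w' = 0 := by
    rw [hw'def, quartic_bubble_eval_aeval_mv]
    have hfun : (fun i => MvPolynomial.eval ![1/4, 1/2] ((![A₁, A₂] : Fin 2 → MvPolynomial (Fin 2) ℝ) i))
        = ![G₃.1, G₃.2] := by
      funext i
      fin_cases i <;> (simp [hA₁def, hA₂def, hg3.1, hg3.2]; try ring)
    rw [hfun]
    exact hwg3
  have hw'0 : w' = 0 :=
    quartic_bubble_ref_unique w' hw'4 hw'A hw'B hw'C hw'G1 hw'G2 hw'G3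
  -- invert the affine substitution
  set B₁ : MvPolynomial (Fin 2) ℝ :=
    C ((V₁.2 * (V₃.1 - V₁.1) - V₁.1 * (V₃.2 - V₁.2)) / ((V₂.1 - V₁.1) * (V₃.2 - V₁.2) - (V₂.2 - V₁.2) * (V₃.1 - V₁.1)))
      + C ((V₃.2 - V₁.2) / ((V₂.1 - V₁.1) * (V₃.2 - V₁.2) - (V₂.2 - V₁.2) * (V₃.1 - V₁.1))) * X 0 + C (-(V₃.1 - V₁.1) / ((V₂.1 - V₁.1) * (V₃.2 - V₁.2) - (V₂.2 - V₁.2) * (V₃.1 - V₁.1))) * X 1 with hB₁def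
  set B₂ : MvPolynomial (Fin 2) ℝ :=
    C ((V₁.1 * (V₂.2 - V₁.2) - V₁.2 * (V₂.1 - V₁.1)) / ((V₂.1 - V₁.1) * (V₃.2 - V₁.2) - (V₂.2 - V₁.2) * (V₃.1 - V₁.1)))
      + C (-(V₂.2 - V₁.2) / ((V₂.1 - V₁.1) * (V₃.2 - V₁.2) - (V₂.2 - V₁.2) * (V₃.1 - V₁.1))) * X 0 + C ((V₂.1 - V₁.1) / ((V₂.1 - V₁.1) * (V₃.2 - V₁.2) - (V₂.2 - V₁.2) * (V₃.1 - V₁.1))) * X 1 with hB₂def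
  have hwinv : w = MvPolynomial.aeval ![B₁, B₂] w' := by
    apply MvPolynomial.funext
    intro z
    have hfun : (fun i => MvPolynomial.eval
        (fun k => MvPolynomial.eval z ((![B₁, B₂] : Fin 2 → MvPolynomial (Fin 2) ℝ) k))
        ((![A₁, A₂] : Fin 2 → MvPolynomial (Fin 2) ℝ) i)) = z := by
      funext i
      fin_cases i <;>
      · simp only [Fin.zero_eta, Fin.mk_one, Matrix.cons_val_zero, Matrix.cons_val_one, Matrix.head_cons,
          hA₁def, hA₂def, hB₁def, hB₂def, map_add, map_mul, MvPolynomial.eval_C,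
          MvPolynomial.eval_X]
        set D := (V₂.1 - V₁.1) * (V₃.2 - V₁.2) - (V₂.2 - V₁.2) * (V₃.1 - V₁.1) with hDdef
        field_simp
        rw [hDdef]
        ring
    have h1 : MvPolynomial.eval z (MvPolynomial.aeval ![B₁, B₂] w')
        = MvPolynomial.eval (fun i => MvPolynomial.eval
            (fun k => MvPolynomial.eval z ((![B₁, B₂] : Fin 2 → MvPolynomial (Fin 2) ℝ) k))
            ((![A₁, A₂] : Fin 2 → MvPolynomial (Fin 2) ℝ) i)) w := by
      rw [quartic_bubble_eval_aeval_mv, hw'def, quartic_bubble_eval_aeval_mv]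
    rw [h1, hfun]
  have hw0 : w = 0 := by
    rw [hwinv, hw'0, map_zero]
  have := sub_eq_zero.mp (hwdef ▸ hw0)
  exact this
end
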